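/- arXiv:1712.08795 — 6 statements merged into one kernel-verified Lean document; each statement's English description precedes it below -/
import Mathlib

section
/- For every probability vector p, limsup_{k→∞} s_k(p)^{1/k} = max{ λ_s : B_s is communicated by some index i with p_i > 0 }, where the maximum is over a nonempty set since the block containing any index of the support of p is communicated by that index. (This is the paper's Proposition on tracial entropies of graphs: the entropy h_X^τ of a tracial state τ equals the maximum of log λ_{G_s} over the irreducible components G_s communicated by the support of τ, here stated in exponential form.) -/
/-- `s_k(p) = ∑_{i,j} p_i (G^k)_{ij}`, where `G` has natural-number entries. -/
def sk {N : ℕ} (G : Matrix (Fin N) (Fin N) ℕ) (p : Fin N → ℝ) (k : ℕ) : ℝ :=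
  ∑ i, ∑ j, p i * ((G ^ k) i j : ℝ)

/-- The block `B_s = blk⁻¹(s)` is communicated by the index `i`: there exist `k ≥ 0` and
`j ∈ B_s` with `(G^k)_{ij} > 0`. -/
def CommByIdx {N m : ℕ} (G : Matrix (Fin N) (Fin N) ℕ) (blk : Fin N → Fin m)
    (s : Fin m) (i : Fin N) : Prop :=
  ∃ k : ℕ, ∃ j : Fin N, blk j = s ∧ 0 < (G ^ k) i j

/-- The block `B_r` is communicated by the block `B_s`: it is communicated by some index of
`B_s`. -/
def CommByBlk {N m : ℕ} (G : Matrix (Fin N) (Fin N) ℕ) (blk : Fin N → Fin m)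
    (r s : Fin m) : Prop :=
  ∃ i : Fin N, blk i = s ∧ CommByIdx G blk r i

/-- The block `B_s` is a sink: `G_{ij} = 0` for all `i ∈ B_s` and `j ∉ B_s`. -/
def IsSinkBlk {N m : ℕ} (G : Matrix (Fin N) (Fin N) ℕ) (blk : Fin N → Fin m)
    (s : Fin m) : Prop :=
  ∀ i j : Fin N, blk i = s → blk j ≠ s → G i j = 0

/-- The block `B_s` is `μ`-maximal: `λ_s = μ` and `λ_s ≥ λ_r` for every block `B_r`
communicated by `B_s`. -/
def IsMaximalBlk {N m : ℕ} (G : Matrix (Fin N) (Fin N) ℕ) (blk : Fin N → Fin m)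
    (lam : Fin m → ℝ) (μ : ℝ) (s : Fin m) : Prop :=
  lam s = μ ∧ ∀ r : Fin m, CommByBlk G blk r s → lam r ≤ lam s

open Filter Finset Real


section helpers
variable {N m : ℕ} (G : Matrix (Fin N) (Fin N) ℕ) (blk : Fin N → Fin m)

lemma pow_upper_tri (hupper : ∀ i j : Fin N, blk j < blk i → G i j = 0) :
    ∀ (k : ℕ) (i j : Fin N), blk j < blk i → (G ^ k) i j = 0 := by
  intro k
  induction k with
  | zero =>
    intro i j h
    have hij : i ≠ j := by rintro rfl; exact lt_irrefl _ h
    simp [Matrix.one_apply_ne hij]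
  | succ k ih =>
    intro i j h
    rw [pow_succ, Matrix.mul_apply]
    apply Finset.sum_eq_zero
    intro l _
    rcases lt_or_ge (blk l) (blk i) with hl | hl
    · rw [ih i l hl, zero_mul]
    · rw [hupper l j (lt_of_lt_of_le h hl), mul_zero]

lemma diag_pow (hupper : ∀ i j : Fin N, blk j < blk i → G i j = 0)
    (lam : Fin m → ℝ) (w : Fin N → ℝ)
    (heig : ∀ i : Fin N,
      ∑ j ∈ Finset.univ.filter (fun j => blk j = blk i), (G i j : ℝ) * w j
        = lam (blk i) * w i) :
    ∀ (k : ℕ) (i : Fin N),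
      ∑ j ∈ Finset.univ.filter (fun j => blk j = blk i), ((G ^ k) i j : ℝ) * w j
        = lam (blk i) ^ k * w i := by
  intro k
  induction k with
  | zero =>
    intro i
    rw [pow_zero, pow_zero, one_mul]
    have hmem : i ∈ Finset.univ.filter (fun j => blk j = blk i) :=
      Finset.mem_filter.2 ⟨Finset.mem_univ i, rfl⟩
    rw [Finset.sum_eq_single_of_mem i hmem]
    · simp [Matrix.one_apply]
    · intro j _ hji
      rw [Matrix.one_apply_ne' hji]
      simp
  | succ k ih =>
    intro i
    have expand : ∀ j, ((G ^ (k+1)) i j : ℝ) * w j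
        = ∑ l, (G i l : ℝ) * (((G ^ k) l j : ℝ) * w j) := by
      intro j
      rw [pow_succ', Matrix.mul_apply]
      push_cast
      rw [Finset.sum_mul]
      exact Finset.sum_congr rfl fun l _ => by ring
    calc ∑ j ∈ Finset.univ.filter (fun j => blk j = blk i), ((G ^ (k+1)) i j : ℝ) * w j
        = ∑ j ∈ Finset.univ.filter (fun j => blk j = blk i),
            ∑ l, (G i l : ℝ) * (((G ^ k) l j : ℝ) * w j) :=
          Finset.sum_congr rfl fun j _ => expand j
      _ = ∑ l, ∑ j ∈ Finset.univ.filter (fun j => blk j = blk i),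
            (G i l : ℝ) * (((G ^ k) l j : ℝ) * w j) := Finset.sum_comm
      _ = ∑ l, (G i l : ℝ) * ∑ j ∈ Finset.univ.filter (fun j => blk j = blk i),
            ((G ^ k) l j : ℝ) * w j := by
          exact Finset.sum_congr rfl fun l _ => (Finset.mul_sum _ _ _).symm
      _ = ∑ l ∈ Finset.univ.filter (fun l => blk l = blk i), (G i l : ℝ) *
            ∑ j ∈ Finset.univ.filter (fun j => blk j = blk i), ((G ^ k) l j : ℝ) * w j := by
          rw [← Finset.sum_filter_add_sum_filter_not Finset.univ (fun l => blk l = blk i)]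
          have h0 : ∑ l ∈ Finset.univ.filter (fun l => ¬ blk l = blk i), (G i l : ℝ) *
              ∑ j ∈ Finset.univ.filter (fun j => blk j = blk i), ((G ^ k) l j : ℝ) * w j = 0 := by
            apply Finset.sum_eq_zero
            intro l hl
            rcases lt_or_gt_of_ne (Finset.mem_filter.1 hl).2 with hlt | hgt
            · rw [hupper i l hlt]; simp
            · have : ∑ j ∈ Finset.univ.filter (fun j => blk j = blk i),
                  ((G ^ k) l j : ℝ) * w j = 0 := by
                apply Finset.sum_eq_zero
                intro j hj
                rw [pow_upper_tri G blk hupper k l j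
                  ((Finset.mem_filter.1 hj).2 ▸ hgt)]
                simp
              rw [this, mul_zero]
          rw [h0, add_zero]
      _ = ∑ l ∈ Finset.univ.filter (fun l => blk l = blk i), (G i l : ℝ) *
            (lam (blk i) ^ k * w l) := by
          apply Finset.sum_congr rfl
          intro l hl
          have hbl : blk l = blk i := (Finset.mem_filter.1 hl).2
          have hil := ih l
          rw [hbl] at hil
          rw [hil]
      _ = lam (blk i) ^ k * ∑ l ∈ Finset.univ.filter (fun l => blk l = blk i),
            (G i l : ℝ) * w l := by
          rw [Finset.mul_sum]; exact Finset.sum_congr rfl fun l _ => by ring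
      _ = lam (blk i) ^ (k+1) * w i := by rw [heig i]; ring

end helpers


lemma f_zero {N : ℕ} (G : Matrix (Fin N) (Fin N) ℕ) (w : Fin N → ℝ) (i : Fin N) :
    ∑ j, ((G ^ 0) i j : ℝ) * w j = w i := by
  rw [pow_zero]
  rw [Finset.sum_eq_single_of_mem i (Finset.mem_univ i)]
  · simp [Matrix.one_apply]
  · intro j _ hji
    rw [Matrix.one_apply_ne' hji]
    simp

lemma f_succ {N : ℕ} (G : Matrix (Fin N) (Fin N) ℕ) (w : Fin N → ℝ) (i : Fin N) (k : ℕ) :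
    ∑ j, ((G ^ (k+1)) i j : ℝ) * w j
      = ∑ l, (G i l : ℝ) * ∑ j, ((G ^ k) l j : ℝ) * w j := by
  have expand : ∀ j, ((G ^ (k+1)) i j : ℝ) * w j
      = ∑ l, (G i l : ℝ) * (((G ^ k) l j : ℝ) * w j) := by
    intro j
    rw [pow_succ', Matrix.mul_apply]
    push_cast
    rw [Finset.sum_mul]
    exact Finset.sum_congr rfl fun l _ => by ring
  calc ∑ j, ((G ^ (k+1)) i j : ℝ) * w j
      = ∑ j, ∑ l, (G i l : ℝ) * (((G ^ k) l j : ℝ) * w j) :=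
        Finset.sum_congr rfl fun j _ => expand j
    _ = ∑ l, ∑ j, (G i l : ℝ) * (((G ^ k) l j : ℝ) * w j) := Finset.sum_comm
    _ = ∑ l, (G i l : ℝ) * ∑ j, ((G ^ k) l j : ℝ) * w j :=
        Finset.sum_congr rfl fun l _ => (Finset.mul_sum _ _ _).symm

lemma f_nonneg {N : ℕ} (G : Matrix (Fin N) (Fin N) ℕ) (w : Fin N → ℝ) (hw : ∀ i, 0 < w i)
    (i : Fin N) (k : ℕ) : 0 ≤ ∑ j, ((G ^ k) i j : ℝ) * w j :=
  Finset.sum_nonneg fun j _ => mul_nonneg (Nat.cast_nonneg _) (hw j).le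

set_option maxHeartbeats 1600000 in
lemma ub_main {N m : ℕ} (hN : 1 ≤ N) (G : Matrix (Fin N) (Fin N) ℕ) (blk : Fin N → Fin m)
    (hupper : ∀ i j : Fin N, blk j < blk i → G i j = 0)
    (lam : Fin m → ℝ) (hlam : ∀ s, 0 ≤ lam s)
    (w : Fin N → ℝ) (hw : ∀ i, 0 < w i)
    (heig : ∀ i : Fin N,
      ∑ j ∈ Finset.univ.filter (fun j => blk j = blk i), (G i j : ℝ) * w j
        = lam (blk i) * w i)
    (I : Finset (Fin N)) (hIcl : ∀ i ∈ I, ∀ j, 0 < G i j → j ∈ I)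
    (ν : ℝ) (hν : 1 ≤ ν) (hlamI : ∀ i ∈ I, lam (blk i) ≤ ν) :
    ∀ d : ℕ, ∃ C : ℝ, 0 < C ∧ ∀ i ∈ I, (m - 1 - (blk i : ℕ)) < d → ∀ k : ℕ,
      ∑ j, ((G ^ k) i j : ℝ) * w j ≤ C * ((k : ℝ) + 1) ^ d * ν ^ k := by
  have hν0 : (0:ℝ) ≤ ν := le_trans zero_le_one hν
  have hNe : (Finset.univ : Finset (Fin N)).Nonempty := ⟨⟨0, hN⟩, Finset.mem_univ _⟩
  intro d
  induction d with
  | zero => exact ⟨1, one_pos, fun i hi hd k => absurd hd (Nat.not_lt_zero _)⟩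
  | succ d ihd =>
    obtain ⟨C, hC, hCb⟩ := ihd
    set wmax := Finset.univ.sup' hNe w with hwmaxdef
    set wmin := Finset.univ.inf' hNe w with hwmindef
    have hwmin : 0 < wmin := (Finset.lt_inf'_iff hNe).2 fun i _ => hw i
    have hwle : ∀ i, w i ≤ wmax := fun i => Finset.le_sup' w (Finset.mem_univ i)
    have hwge : ∀ i, wmin ≤ w i := fun i => Finset.inf'_le w (Finset.mem_univ i)
    have hwmax : 0 < wmax := lt_of_lt_of_le hwmin (le_trans (hwge ⟨0, hN⟩) (hwle ⟨0, hN⟩))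
    set Γ : ℝ := ∑ i, ∑ j, (G i j : ℝ) with hΓdef
    have hΓrow : ∀ i, ∑ j, (G i j : ℝ) ≤ Γ := by
      intro i
      exact Finset.single_le_sum (f := fun i => ∑ j, (G i j:ℝ))
        (fun i _ => Finset.sum_nonneg fun j _ => Nat.cast_nonneg _) (Finset.mem_univ i)
    have hΓ0 : 0 ≤ Γ :=
      Finset.sum_nonneg fun i _ => Finset.sum_nonneg fun j _ => Nat.cast_nonneg _
    set D : ℝ := (Γ * C + 1) / wmin with hDdef
    have hD : 0 < D := div_pos (by positivity) hwmin
    have hDw : ∀ i, Γ * C ≤ D * w i := by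
      intro i
      calc Γ * C ≤ Γ * C + 1 := le_add_of_nonneg_right zero_le_one
        _ = D * wmin := by rw [hDdef, div_mul_cancel₀ _ (ne_of_gt hwmin)]
        _ ≤ D * w i := mul_le_mul_of_nonneg_left (hwge i) hD.le
    have inner : ∀ k : ℕ, ∀ i ∈ I, (m - 1 - (blk i : ℕ)) < d + 1 →
        ∑ j, ((G ^ k) i j : ℝ) * w j
          ≤ (1 + D * k * ((k:ℝ) + 1) ^ d) * ν ^ k * w i := by
      intro k
      induction k with
      | zero =>
        intro i hi hd'
        rw [f_zero]
        push_cast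
        norm_num
      | succ k ihk =>
        intro i hi hd'
        have hBk : (0:ℝ) ≤ (1 + D * k * ((k:ℝ) + 1) ^ d) * ν ^ k := by positivity
        rw [f_succ]
        rw [← Finset.sum_filter_add_sum_filter_not Finset.univ (fun l => blk l = blk i)]
        have h1 : ∑ l ∈ Finset.univ.filter (fun l => blk l = blk i),
            (G i l : ℝ) * ∑ j, ((G ^ k) l j : ℝ) * w j
            ≤ (1 + D * k * ((k:ℝ) + 1) ^ d) * ν ^ k * (ν * w i) := by
          calc ∑ l ∈ Finset.univ.filter (fun l => blk l = blk i),
              (G i l : ℝ) * ∑ j, ((G ^ k) l j : ℝ) * w j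
              ≤ ∑ l ∈ Finset.univ.filter (fun l => blk l = blk i),
                (G i l : ℝ) * ((1 + D * k * ((k:ℝ) + 1) ^ d) * ν ^ k * w l) := by
                apply Finset.sum_le_sum
                intro l hl
                rcases Nat.eq_zero_or_pos (G i l) with h0 | h0
                · simp [h0]
                · have hlI : l ∈ I := hIcl i hi l h0
                  have hdep : (m - 1 - (blk l : ℕ)) < d + 1 := by
                    rw [(Finset.mem_filter.1 hl).2]; exact hd'
                  exact mul_le_mul_of_nonneg_left (ihk l hlI hdep) (Nat.cast_nonneg _)
            _ = (1 + D * k * ((k:ℝ) + 1) ^ d) * ν ^ k *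
                ∑ l ∈ Finset.univ.filter (fun l => blk l = blk i), (G i l : ℝ) * w l := by
                rw [Finset.mul_sum]
                exact Finset.sum_congr rfl fun l _ => by ring
            _ = (1 + D * k * ((k:ℝ) + 1) ^ d) * ν ^ k * (lam (blk i) * w i) := by rw [heig i]
            _ ≤ (1 + D * k * ((k:ℝ) + 1) ^ d) * ν ^ k * (ν * w i) := by
                apply mul_le_mul_of_nonneg_left _ hBk
                exact mul_le_mul_of_nonneg_right (hlamI i hi) (hw i).le
        have h2 : ∑ l ∈ Finset.univ.filter (fun l => ¬ blk l = blk i),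
            (G i l : ℝ) * ∑ j, ((G ^ k) l j : ℝ) * w j
            ≤ D * ((k:ℝ) + 1) ^ d * ν ^ k * w i := by
          have hCk : (0:ℝ) ≤ C * ((k:ℝ) + 1) ^ d * ν ^ k := by positivity
          calc ∑ l ∈ Finset.univ.filter (fun l => ¬ blk l = blk i),
              (G i l : ℝ) * ∑ j, ((G ^ k) l j : ℝ) * w j
              ≤ ∑ l ∈ Finset.univ.filter (fun l => ¬ blk l = blk i),
                (G i l : ℝ) * (C * ((k:ℝ) + 1) ^ d * ν ^ k) := by
                apply Finset.sum_le_sum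
                intro l hl
                rcases Nat.eq_zero_or_pos (G i l) with h0 | h0
                · simp [h0]
                · have hlI : l ∈ I := hIcl i hi l h0
                  have hne : blk l ≠ blk i := (Finset.mem_filter.1 hl).2
                  have hgt : blk i < blk l := by
                    rcases lt_or_gt_of_ne hne with h | h
                    · exact absurd (hupper i l h) (by omega)
                    · exact h
                  have hlm : (blk l : ℕ) ≤ m - 1 := Nat.le_sub_one_of_lt (blk l).isLt
                  have him : (blk i : ℕ) < m - 1 := lt_of_lt_of_le hgt hlm
                  have hdep : (m - 1 - (blk l : ℕ)) < d := by
                    have h3 : (m - 1 - (blk l : ℕ)) < (m - 1 - (blk i : ℕ)) :=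
                      Nat.sub_lt_sub_left him hgt
                    omega
                  exact mul_le_mul_of_nonneg_left (hCb l hlI hdep k) (Nat.cast_nonneg _)
            _ = (∑ l ∈ Finset.univ.filter (fun l => ¬ blk l = blk i), (G i l : ℝ)) *
                (C * ((k:ℝ) + 1) ^ d * ν ^ k) := (Finset.sum_mul _ _ _).symm
            _ ≤ Γ * (C * ((k:ℝ) + 1) ^ d * ν ^ k) := by
                apply mul_le_mul_of_nonneg_right _ hCk
                calc ∑ l ∈ Finset.univ.filter (fun l => ¬ blk l = blk i), (G i l : ℝ)
                    ≤ ∑ l, (G i l : ℝ) :=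
                      Finset.sum_le_sum_of_subset_of_nonneg (Finset.filter_subset _ _)
                        (fun l _ _ => Nat.cast_nonneg _)
                  _ ≤ Γ := hΓrow i
            _ ≤ D * ((k:ℝ) + 1) ^ d * ν ^ k * w i := by
                have := hDw i
                nlinarith [pow_nonneg hν0 k, pow_nonneg (by positivity : (0:ℝ) ≤ (k:ℝ)+1) d]
        have hpow : ν ^ k ≤ ν ^ (k+1) := pow_le_pow_right₀ hν (Nat.le_succ k)
        have hkk : ((k:ℝ) + 1) ^ d ≤ (((k:ℝ) + 1) + 1) ^ d :=
          pow_le_pow_left₀ (by positivity) (by linarith) d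
        have h4 : (0:ℝ) ≤ ((k:ℝ) + 1) ^ d := by positivity
        have h5 : (0:ℝ) ≤ ν ^ (k+1) := pow_nonneg hν0 (k+1)
        have e1 : D * ((k:ℝ)+1)^d * ν ^ k ≤ D * ((k:ℝ)+1)^d * ν ^ (k+1) :=
          mul_le_mul_of_nonneg_left hpow (by positivity)
        have e2 : 1 + D * ((k:ℝ)+1) * ((k:ℝ)+1)^d ≤ 1 + D * ((k:ℝ)+1) * (((k:ℝ)+1)+1)^d := by
          have := mul_le_mul_of_nonneg_left hkk
            (mul_nonneg hD.le (by positivity : (0:ℝ) ≤ (k:ℝ)+1))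
          linarith
        have e3 : (1 + D * ((k:ℝ)+1) * ((k:ℝ)+1)^d) * ν ^ (k+1) * w i
            ≤ (1 + D * ((k:ℝ)+1) * (((k:ℝ)+1)+1)^d) * ν ^ (k+1) * w i :=
          mul_le_mul_of_nonneg_right (mul_le_mul_of_nonneg_right e2 h5) (hw i).le
        push_cast
        calc _ ≤ (1 + D * k * ((k:ℝ) + 1) ^ d) * ν ^ k * (ν * w i)
              + D * ((k:ℝ) + 1) ^ d * ν ^ k * w i := add_le_add h1 h2
          _ = (1 + D * (k:ℝ) * ((k:ℝ)+1)^d) * ν ^ (k+1) * w i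
              + (D * ((k:ℝ)+1)^d * ν ^ k) * w i := by rw [pow_succ]; ring
          _ ≤ (1 + D * (k:ℝ) * ((k:ℝ)+1)^d) * ν ^ (k+1) * w i
              + (D * ((k:ℝ)+1)^d * ν ^ (k+1)) * w i := by
              have := mul_le_mul_of_nonneg_right e1 (hw i).le
              linarith
          _ = (1 + D * ((k:ℝ)+1) * ((k:ℝ)+1)^d) * ν ^ (k+1) * w i := by ring
          _ ≤ (1 + D * ((k:ℝ)+1) * (((k:ℝ)+1)+1)^d) * ν ^ (k+1) * w i := e3
    refine ⟨(1 + D) * wmax, by positivity, fun i hi hd' k => ?_⟩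
    have hin := inner k i hi hd'
    have hb1 : (1:ℝ) ≤ ((k:ℝ) + 1) ^ (d+1) :=
      one_le_pow₀ (by linarith [Nat.cast_nonneg (α := ℝ) k])
    have hb2 : (k:ℝ) * ((k:ℝ)+1)^d ≤ ((k:ℝ)+1)^(d+1) := by
      rw [pow_succ]
      have h4 : (0:ℝ) ≤ ((k:ℝ)+1)^d := by positivity
      nlinarith
    have h5 : (0:ℝ) ≤ ν ^ k := pow_nonneg hν0 k
    have hwi : w i ≤ wmax := hwle i
    have key : 1 + D * (k:ℝ) * ((k:ℝ)+1)^d ≤ (1+D) * ((k:ℝ)+1)^(d+1) := by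
      have h7 : D * ((k:ℝ) * ((k:ℝ)+1)^d) ≤ D * ((k:ℝ)+1)^(d+1) :=
        mul_le_mul_of_nonneg_left hb2 hD.le
      nlinarith
    calc ∑ j, ((G ^ k) i j : ℝ) * w j ≤ (1 + D * k * ((k:ℝ)+1)^d) * ν ^ k * w i := hin
      _ ≤ ((1+D) * ((k:ℝ)+1)^(d+1)) * ν ^ k * w i :=
          mul_le_mul_of_nonneg_right (mul_le_mul_of_nonneg_right key h5) (hw i).le
      _ ≤ ((1+D) * ((k:ℝ)+1)^(d+1)) * ν ^ k * wmax := by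
          apply mul_le_mul_of_nonneg_left hwi
          positivity
      _ = (1 + D) * wmax * ((k:ℝ)+1)^(d+1) * ν ^ k := by ring


lemma lim_inv_nat : Tendsto (fun n : ℕ => ((n:ℝ))⁻¹) atTop (nhds 0) :=
  tendsto_inv_atTop_zero.comp tendsto_natCast_atTop_atTop

lemma lim_rpow_inv (c : ℝ) (hc : 0 < c) :
    Tendsto (fun n : ℕ => c ^ ((n:ℝ)⁻¹)) atTop (nhds 1) := by
  have h0 : Tendsto (fun n : ℕ => Real.log c * ((n:ℝ)⁻¹)) atTop (nhds 0) := by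
    simpa using lim_inv_nat.const_mul (Real.log c)
  have h1 := (Real.continuous_exp.tendsto 0).comp h0
  simp only [Function.comp_def, Real.exp_zero] at h1
  refine h1.congr fun n => ?_
  rw [Real.rpow_def_of_pos hc]

lemma lim_log_nat : Tendsto (fun n : ℕ => Real.log ((n:ℝ)+1) * ((n:ℝ)⁻¹)) atTop (nhds 0) := by
  have hA : Tendsto (fun n : ℕ => Real.log ((n:ℝ)+1) / ((n:ℝ)+1)) atTop (nhds 0) := by
    have h1 : Tendsto (fun n : ℕ => ((n:ℝ)+1)) atTop atTop :=
      Filter.tendsto_atTop_add_const_right atTop 1 tendsto_natCast_atTop_atTop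
    exact (Real.isLittleO_log_id_atTop.tendsto_div_nhds_zero).comp h1
  have hB : Tendsto (fun n : ℕ => 1 + ((n:ℝ))⁻¹) atTop (nhds 1) := by
    simpa using lim_inv_nat.const_add 1
  have := hA.mul hB
  rw [zero_mul] at this
  refine this.congr' ?_
  filter_upwards [Filter.eventually_ge_atTop 1] with n hn
  have hn0 : ((n:ℝ)) ≠ 0 := Nat.cast_ne_zero.2 (by omega)
  have hn1 : ((n:ℝ)) + 1 ≠ 0 := by positivity
  field_simp

lemma lim_nat_rpow (a : ℝ) :
    Tendsto (fun n : ℕ => ((n:ℝ)+1) ^ (a * ((n:ℝ)⁻¹))) atTop (nhds 1) := by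
  have h0 : Tendsto (fun n : ℕ => Real.log ((n:ℝ)+1) * (a * ((n:ℝ)⁻¹))) atTop (nhds 0) := by
    have := lim_log_nat.const_mul a
    rw [mul_zero] at this
    refine this.congr fun n => by ring
  have h1 := (Real.continuous_exp.tendsto 0).comp h0
  simp only [Function.comp_def, Real.exp_zero] at h1
  refine h1.congr fun n => ?_
  rw [Real.rpow_def_of_pos (by positivity)]

lemma lim_lb (lam c : ℝ) (hl : 0 < lam) (hc : 0 < c) (k0 : ℕ) :
    Tendsto (fun n : ℕ => (c * lam ^ (n - k0)) ^ ((n:ℝ)⁻¹)) atTop (nhds lam) := by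
  have t1 : Tendsto (fun n : ℕ => Real.log c * ((n:ℝ)⁻¹)) atTop (nhds 0) := by
    simpa using lim_inv_nat.const_mul (Real.log c)
  have t2 : Tendsto (fun n : ℕ => (((n - k0 : ℕ)):ℝ) * ((n:ℝ)⁻¹)) atTop (nhds 1) := by
    have h2 : Tendsto (fun n : ℕ => 1 - (k0:ℝ) * ((n:ℝ)⁻¹)) atTop (nhds 1) := by
      simpa using (lim_inv_nat.const_mul (k0:ℝ)).const_sub 1
    refine h2.congr' ?_
    filter_upwards [Filter.eventually_ge_atTop (k0+1)] with n hn
    have hn0 : ((n:ℝ)) ≠ 0 := by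
      have : (1:ℝ) ≤ (n:ℝ) := by exact_mod_cast le_trans (Nat.le_add_left 1 k0) hn
      linarith
    rw [Nat.cast_sub (by omega)]
    field_simp
  have t3 : Tendsto (fun n : ℕ => Real.log c * ((n:ℝ)⁻¹)
      + (((n - k0 : ℕ)):ℝ) * ((n:ℝ)⁻¹) * Real.log lam) atTop (nhds (Real.log lam)) := by
    have := t1.add (t2.mul_const (Real.log lam))
    simpa using this
  have h1 := (Real.continuous_exp.tendsto _).comp t3
  simp only [Function.comp_def, Real.exp_log hl] at h1
  refine h1.congr' ?_
  filter_upwards [Filter.eventually_ge_atTop 1] with n hn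
  have hpos : 0 < c * lam ^ (n - k0) := by positivity
  rw [Real.rpow_def_of_pos hpos, Real.log_mul (ne_of_gt hc) (by positivity),
    Real.log_pow]
  ring_nf



lemma lam_dichotomy {N m : ℕ} (G : Matrix (Fin N) (Fin N) ℕ) (blk : Fin N → Fin m)
    (hsurj : Function.Surjective blk)
    (hupper : ∀ i j : Fin N, blk j < blk i → G i j = 0)
    (lam : Fin m → ℝ) (hlam : ∀ s, 0 ≤ lam s)
    (w : Fin N → ℝ) (hw : ∀ i, 0 < w i)
    (heig : ∀ i : Fin N,
      ∑ j ∈ Finset.univ.filter (fun j => blk j = blk i), (G i j : ℝ) * w j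
        = lam (blk i) * w i) :
    ∀ s : Fin m, lam s = 0 ∨ 1 ≤ lam s := by
  intro s
  by_contra hcon
  push_neg at hcon
  obtain ⟨h0, h1⟩ := hcon
  have hpos : 0 < lam s := lt_of_le_of_ne (hlam s) (Ne.symm h0)
  obtain ⟨i, rfl⟩ := hsurj s
  -- N ≥ 1 since Fin N is inhabited via i
  have hNe : (Finset.univ : Finset (Fin N)).Nonempty := ⟨i, Finset.mem_univ i⟩
  set wmin := Finset.univ.inf' hNe w with hwmindef
  have hwmin : 0 < wmin := (Finset.lt_inf'_iff hNe).2 fun j _ => hw j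
  have key : ∀ k : ℕ, wmin ≤ lam (blk i) ^ k * w i := by
    intro k
    rw [← diag_pow G blk hupper lam w heig k i]
    have hex : ∃ j ∈ Finset.univ.filter (fun j => blk j = blk i), 0 < (G ^ k) i j := by
      by_contra hz
      push_neg at hz
      have : ∑ j ∈ Finset.univ.filter (fun j => blk j = blk i), ((G ^ k) i j : ℝ) * w j
          = 0 := Finset.sum_eq_zero fun j hj => by
        have hz0 : (G ^ k) i j = 0 := Nat.le_zero.1 (hz j hj)
        rw [hz0]; simp
      rw [diag_pow G blk hupper lam w heig k i] at this
      have : 0 < lam (blk i) ^ k * w i := mul_pos (pow_pos hpos k) (hw i)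
      simp_all
    obtain ⟨j, hj, hj0⟩ := hex
    calc wmin ≤ w j := Finset.inf'_le w (Finset.mem_univ j)
      _ = 1 * w j := (one_mul _).symm
      _ ≤ ((G ^ k) i j : ℝ) * w j := by
          apply mul_le_mul_of_nonneg_right _ (hw j).le
          exact_mod_cast hj0
      _ ≤ ∑ j ∈ Finset.univ.filter (fun j => blk j = blk i), ((G ^ k) i j : ℝ) * w j :=
          Finset.single_le_sum (f := fun j => ((G ^ k) i j : ℝ) * w j)
            (fun j _ => mul_nonneg (Nat.cast_nonneg _) (hw j).le) hj
  have hlim : Filter.Tendsto (fun k : ℕ => lam (blk i) ^ k * w i) atTop (nhds 0) := by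
    have := (tendsto_pow_atTop_nhds_zero_of_lt_one (hlam _) h1).mul_const (w i)
    simpa using this
  have := hlim.eventually (eventually_lt_nhds hwmin)
  obtain ⟨k, hk⟩ := this.exists
  exact absurd (key k) (not_le.2 hk)

lemma pow_entry_le {N : ℕ} (G : Matrix (Fin N) (Fin N) ℕ) (a b : ℕ) (i l j : Fin N) :
    (G ^ a) i l * (G ^ b) l j ≤ (G ^ (a + b)) i j := by
  rw [pow_add, Matrix.mul_apply]
  exact Finset.single_le_sum (f := fun x => (G ^ a) i x * (G ^ b) x j)
    (fun x _ => Nat.zero_le _) (Finset.mem_univ l)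

set_option maxHeartbeats 1600000 in
/-- for every probability vector `p`, `limsup_k s_k(p)^{1/k}` is the
maximum of the eigenvalues `λ_s` over the blocks `B_s` communicated by some index
in the support of `p` (stated via `IsGreatest`, which also records that this set
of eigenvalues is nonempty). -/
theorem stmt_5
    -- Context: `G` is an `N × N` matrix with nonnegative integer entries, block upper
    -- triangular with respect to the partition of `Fin N` into `m` nonempty consecutive
    -- blocks given by the fibers of the monotone surjection `blk`; each diagonal block
    -- `G_s` has eigenvalue `λ_s ≥ 0` with strictly positive eigenvector `w|_{B_s}`.
    (N m : ℕ) (hN : 1 ≤ N) (hm : 1 ≤ m)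
    (G : Matrix (Fin N) (Fin N) ℕ)
    (blk : Fin N → Fin m) (hmono : Monotone blk) (hsurj : Function.Surjective blk)
    (hupper : ∀ i j : Fin N, blk j < blk i → G i j = 0)
    (lam : Fin m → ℝ) (hlam : ∀ s, 0 ≤ lam s)
    (w : Fin N → ℝ) (hw : ∀ i, 0 < w i)
    (heig : ∀ i : Fin N,
      ∑ j ∈ Finset.univ.filter (fun j => blk j = blk i), (G i j : ℝ) * w j
        = lam (blk i) * w i)
    :
    ∀ p : Fin N → ℝ, (∀ i, 0 ≤ p i) → (∑ i, p i = 1) →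
      IsGreatest
        {x : ℝ | ∃ s : Fin m, (∃ i : Fin N, 0 < p i ∧ CommByIdx G blk s i) ∧ lam s = x}
        (Filter.limsup (fun k : ℕ => sk G p k ^ ((k : ℝ)⁻¹)) Filter.atTop) := by
  classical
  intro p hp hp1
  set u : ℕ → ℝ := fun k => sk G p k ^ ((k : ℝ)⁻¹) with hu
  -- support is nonempty
  have hex : ∃ i, 0 < p i := by
    by_contra h
    push_neg at h
    have : ∑ i, p i = 0 := Finset.sum_eq_zero fun i _ => le_antisymm (h i) (hp i)
    rw [hp1] at this
    norm_num at this
  obtain ⟨i₀, hi₀⟩ := hex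
  have hG0 : ∀ i : Fin N, 0 < (G ^ 0) i i := by
    intro i; simp [Matrix.one_apply]
  -- set of communicated blocks
  set T : Finset (Fin m) :=
    Finset.univ.filter (fun s => ∃ i, 0 < p i ∧ CommByIdx G blk s i) with hT
  have hTmem : ∀ s, s ∈ T ↔ ∃ i, 0 < p i ∧ CommByIdx G blk s i := by
    intro s
    rw [hT, Finset.mem_filter]
    simp
  have hTne : T.Nonempty := ⟨blk i₀, (hTmem _).2 ⟨i₀, hi₀, 0, i₀, rfl, hG0 i₀⟩⟩
  obtain ⟨s₀, hs₀T, hs₀⟩ := Finset.exists_mem_eq_sup' hTne lam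
  set μ := T.sup' hTne lam with hμ
  have hμ0 : 0 ≤ μ := hs₀ ▸ hlam s₀
  have hlamT : ∀ s ∈ T, lam s ≤ μ := fun s hs => Finset.le_sup' lam hs
  -- reachable set of indices
  set I : Finset (Fin N) :=
    Finset.univ.filter (fun j => ∃ i, 0 < p i ∧ ∃ k, 0 < (G ^ k) i j) with hI
  have hImem : ∀ j, j ∈ I ↔ ∃ i, 0 < p i ∧ ∃ k, 0 < (G ^ k) i j := by
    intro j
    rw [hI, Finset.mem_filter]
    simp
  have hIcl : ∀ i ∈ I, ∀ j, 0 < G i j → j ∈ I := by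
    intro i hi j hGij
    obtain ⟨i', hi', k, hk⟩ := (hImem i).1 hi
    refine (hImem j).2 ⟨i', hi', k + 1, ?_⟩
    have h1 : 0 < (G ^ k) i' i * (G ^ 1) i j := by
      rw [pow_one]; exact Nat.mul_pos hk hGij
    exact lt_of_lt_of_le h1 (pow_entry_le G k 1 i' i j)
  have hsupp : ∀ i, 0 < p i → i ∈ I := fun i hi =>
    (hImem i).2 ⟨i, hi, 0, hG0 i⟩
  have hIT : ∀ i ∈ I, blk i ∈ T := by
    intro i hi
    obtain ⟨i', hi', k, hk⟩ := (hImem i).1 hi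
    exact (hTmem _).2 ⟨i', hi', k, i, rfl, hk⟩
  have hlamI : ∀ i ∈ I, lam (blk i) ≤ μ := fun i hi => hlamT _ (hIT i hi)
  have hsk0 : ∀ k, 0 ≤ sk G p k := fun k =>
    Finset.sum_nonneg fun i _ => Finset.sum_nonneg fun j _ =>
      mul_nonneg (hp i) (Nat.cast_nonneg _)
  have hu0 : ∀ k, 0 ≤ u k := fun k => Real.rpow_nonneg (hsk0 k) _
  -- min / max of w
  have hNe : (Finset.univ : Finset (Fin N)).Nonempty := ⟨⟨0, hN⟩, Finset.mem_univ _⟩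
  set wmax := Finset.univ.sup' hNe w with hwmaxdef
  set wmin := Finset.univ.inf' hNe w with hwmindef
  have hwmin : 0 < wmin := (Finset.lt_inf'_iff hNe).2 fun i _ => hw i
  have hwle : ∀ i, w i ≤ wmax := fun i => Finset.le_sup' w (Finset.mem_univ i)
  have hwge : ∀ i, wmin ≤ w i := fun i => Finset.inf'_le w (Finset.mem_univ i)
  have hwmax : 0 < wmax := lt_of_lt_of_le hwmin (le_trans (hwge ⟨0, hN⟩) (hwle ⟨0, hN⟩))
  -- KEY LOWER BOUND
  have key_lb : ∀ s ∈ T, ∃ c : ℝ, 0 < c ∧ ∃ k0 : ℕ, ∀ n, k0 ≤ n →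
      c * lam s ^ (n - k0) ≤ sk G p n := by
    intro s hs
    obtain ⟨i, hpi, k0, j0, hbj0, hk0⟩ := (hTmem s).1 hs
    refine ⟨p i * w j0 / wmax, div_pos (mul_pos hpi (hw j0)) hwmax, k0, fun n hn => ?_⟩
    set F := Finset.univ.filter (fun j => blk j = blk j0) with hF
    have hsub : ∀ j ∈ F, ((G ^ (n - k0)) j0 j : ℝ) ≤ ((G ^ n) i j : ℝ) := by
      intro j _
      have h1 : (G ^ (n - k0)) j0 j ≤ (G ^ k0) i j0 * (G ^ (n - k0)) j0 j := by
        have : 1 ≤ (G ^ k0) i j0 := hk0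
        nlinarith
      have h2 : (G ^ k0) i j0 * (G ^ (n - k0)) j0 j ≤ (G ^ (k0 + (n - k0))) i j :=
        pow_entry_le G k0 (n - k0) i j0 j
      rw [Nat.add_sub_cancel' hn] at h2
      exact_mod_cast le_trans h1 h2
    have hstep1 : lam s ^ (n - k0) * w j0 / wmax ≤ ∑ j ∈ F, ((G ^ (n - k0)) j0 j : ℝ) := by
      rw [div_le_iff₀ hwmax]
      calc lam s ^ (n - k0) * w j0 = lam (blk j0) ^ (n - k0) * w j0 := by rw [hbj0]
        _ = ∑ j ∈ F, ((G ^ (n - k0)) j0 j : ℝ) * w j :=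
            (diag_pow G blk hupper lam w heig (n - k0) j0).symm
        _ ≤ ∑ j ∈ F, ((G ^ (n - k0)) j0 j : ℝ) * wmax :=
            Finset.sum_le_sum fun j _ =>
              mul_le_mul_of_nonneg_left (hwle j) (Nat.cast_nonneg _)
        _ = (∑ j ∈ F, ((G ^ (n - k0)) j0 j : ℝ)) * wmax := (Finset.sum_mul _ _ _).symm
    have hstep2 : ∑ j ∈ F, ((G ^ (n - k0)) j0 j : ℝ) ≤ ∑ j ∈ F, ((G ^ n) i j : ℝ) :=
      Finset.sum_le_sum hsub
    have hstep3 : ∑ j ∈ F, ((G ^ n) i j : ℝ) ≤ ∑ j, ((G ^ n) i j : ℝ) :=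
      Finset.sum_le_sum_of_subset_of_nonneg (Finset.filter_subset _ _)
        (fun j _ _ => Nat.cast_nonneg _)
    have hstep4 : p i * ∑ j, ((G ^ n) i j : ℝ) ≤ sk G p n := by
      have h4 := Finset.single_le_sum
        (f := fun i' => ∑ j, p i' * ((G ^ n) i' j : ℝ))
        (fun i' _ => Finset.sum_nonneg fun j _ => mul_nonneg (hp i') (Nat.cast_nonneg _))
        (Finset.mem_univ i)
      calc p i * ∑ j, ((G ^ n) i j : ℝ) = ∑ j, p i * ((G ^ n) i j : ℝ) :=
            Finset.mul_sum _ _ _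
        _ ≤ sk G p n := by simp only [sk]; exact h4
    calc p i * w j0 / wmax * lam s ^ (n - k0)
        = p i * (lam s ^ (n - k0) * w j0 / wmax) := by ring
      _ ≤ p i * ∑ j, ((G ^ n) i j : ℝ) :=
          mul_le_mul_of_nonneg_left (le_trans hstep1 (le_trans hstep2 hstep3)) hpi.le
      _ ≤ sk G p n := hstep4
  -- UPPER BOUND
  set ν := max μ 1 with hν
  have hν1 : 1 ≤ ν := le_max_right _ _
  have hν0 : (0:ℝ) ≤ ν := le_trans zero_le_one hν1
  have hlamI' : ∀ i ∈ I, lam (blk i) ≤ ν := fun i hi =>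
    le_trans (hlamI i hi) (le_max_left _ _)
  obtain ⟨C, hC, hCb⟩ := ub_main hN G blk hupper lam hlam w hw heig I hIcl ν hν1 hlamI' m
  have hdep : ∀ i : Fin N, m - 1 - (blk i : ℕ) < m := by
    intro i
    omega
  have hskub : ∀ k, sk G p k ≤ C / wmin * ((k:ℝ)+1)^m * ν ^ k := by
    intro k
    have hB0 : 0 ≤ C / wmin * ((k:ℝ)+1)^m * ν ^ k := by positivity
    calc sk G p k = ∑ i, p i * ∑ j, ((G ^ k) i j : ℝ) := by
          rw [sk]
          exact Finset.sum_congr rfl fun i _ => (Finset.mul_sum _ _ _).symm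
      _ ≤ ∑ i, p i * (C / wmin * ((k:ℝ)+1)^m * ν ^ k) := by
          apply Finset.sum_le_sum
          intro i _
          rcases eq_or_lt_of_le (hp i) with h0 | h0
          · rw [← h0]; simp
          · apply mul_le_mul_of_nonneg_left _ (hp i)
            have hf := hCb i (hsupp i h0) (hdep i) k
            have hwS : wmin * ∑ j, ((G ^ k) i j : ℝ) ≤ ∑ j, ((G ^ k) i j : ℝ) * w j := by
              rw [Finset.mul_sum]
              apply Finset.sum_le_sum
              intro j _
              rw [mul_comm]
              exact mul_le_mul_of_nonneg_left (hwge j) (Nat.cast_nonneg _)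
            rw [div_mul_eq_mul_div, div_mul_eq_mul_div, le_div_iff₀ hwmin, mul_comm _ wmin]
            exact le_trans hwS hf
      _ = C / wmin * ((k:ℝ)+1)^m * ν ^ k := by
          rw [← Finset.sum_mul, hp1, one_mul]
  -- continue
  set v : ℕ → ℝ := fun n => (C / wmin) ^ ((n:ℝ)⁻¹) * ((n:ℝ)+1) ^ ((m:ℝ) * ((n:ℝ)⁻¹)) * ν
    with hv
  have hCw : 0 < C / wmin := div_pos hC hwmin
  have hvlim : Tendsto v atTop (nhds ν) := by
    have h := ((lim_rpow_inv _ hCw).mul (lim_nat_rpow (m:ℝ))).mul_const ν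
    simpa using h
  have huv : u ≤ᶠ[atTop] v := by
    filter_upwards [eventually_ge_atTop 1] with n hn
    have hn0 : ((n:ℝ)) ≠ 0 := Nat.cast_ne_zero.2 (by omega)
    have e1 : u n ≤ (C / wmin * ((n:ℝ)+1)^m * ν ^ n) ^ ((n:ℝ)⁻¹) :=
      Real.rpow_le_rpow (hsk0 n) (hskub n) (by positivity)
    refine le_trans e1 (le_of_eq ?_)
    rw [Real.mul_rpow (by positivity) (pow_nonneg hν0 n),
        Real.mul_rpow (le_of_lt hCw) (by positivity)]
    rw [hv]
    congr 1
    · congr 1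
      rw [← Real.rpow_natCast ((n:ℝ)+1) m, ← Real.rpow_mul (by positivity)]
    · rw [← Real.rpow_natCast ν n, ← Real.rpow_mul hν0, mul_inv_cancel₀ hn0, Real.rpow_one]
  have hBdd : IsBoundedUnder (· ≤ ·) atTop u := hvlim.isBoundedUnder_le.mono_le huv
  have hCob : IsCoboundedUnder (· ≤ ·) atTop u :=
    isCoboundedUnder_le_of_eventually_le atTop (x := 0) (Eventually.of_forall hu0)
  have hub : limsup u atTop ≤ ν :=
    le_trans (limsup_le_limsup huv hCob hvlim.isBoundedUnder_le) (le_of_eq hvlim.limsup_eq)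
  have hlb : ∀ s ∈ T, lam s ≤ limsup u atTop := by
    intro s hs
    rcases eq_or_lt_of_le (hlam s) with h0 | hpos
    · rw [← h0]
      exact le_limsup_of_frequently_le (Eventually.of_forall hu0).frequently hBdd
    · obtain ⟨c, hc, k0, hkey⟩ := key_lb s hs
      have hblim := lim_lb (lam s) c hpos hc k0
      have hble : ∀ᶠ n : ℕ in atTop, (c * lam s ^ (n - k0)) ^ ((n:ℝ)⁻¹) ≤ u n := by
        filter_upwards [eventually_ge_atTop k0] with n hn
        exact Real.rpow_le_rpow (by positivity) (hkey n hn) (by positivity)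
      refine le_of_forall_pos_le_add fun ε hε => ?_
      have hev : ∀ᶠ n : ℕ in atTop, lam s - ε ≤ (c * lam s ^ (n - k0)) ^ ((n:ℝ)⁻¹) :=
        hblim.eventually (eventually_ge_nhds (by linarith))
      have hev2 : ∀ᶠ n : ℕ in atTop, lam s - ε ≤ u n := by
        filter_upwards [hev, hble] with n h1 h2
        exact le_trans h1 h2
      have := le_limsup_of_frequently_le hev2.frequently hBdd
      linarith
  rcases le_or_gt 1 μ with hμ1 | hμ1
  · have hνμ : ν = μ := max_eq_left hμ1
    have heq : limsup u atTop = μ := le_antisymm (hνμ ▸ hub) (hs₀ ▸ hlb s₀ hs₀T)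
    constructor
    · exact ⟨s₀, (hTmem s₀).1 hs₀T, by rw [heq, hs₀]⟩
    · rintro x ⟨s, hcomm, rfl⟩
      rw [heq]
      exact hlamT s ((hTmem s).2 hcomm)
  · have hz : ∀ s ∈ T, lam s = 0 := by
      intro s hs
      rcases lam_dichotomy G blk hsurj hupper lam hlam w hw heig s with h | h
      · exact h
      · exact absurd (le_trans h (hlamT s hs)) (not_le.2 hμ1)
    have hz2 : ∀ i ∈ I, ∀ l, blk l = blk i → G i l = 0 := by
      intro i hi l hbl
      have h0 : ∑ j ∈ Finset.univ.filter (fun j => blk j = blk i), (G i j : ℝ) * w j = 0 := by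
        rw [heig i, hz (blk i) (hIT i hi), zero_mul]
      have h1 := (Finset.sum_eq_zero_iff_of_nonneg
        (fun j _ => mul_nonneg (Nat.cast_nonneg _) (hw j).le)).1 h0 l
        (Finset.mem_filter.2 ⟨Finset.mem_univ l, hbl⟩)
      have hwl := (hw l).ne'
      have h2 : (G i l : ℝ) = 0 := by
        rcases mul_eq_zero.1 h1 with h | h
        · exact h
        · exact absurd h hwl
      exact_mod_cast h2
    have hstrict : ∀ k : ℕ, ∀ i ∈ I, ∀ j, 0 < (G ^ k) i j →
        (blk i : ℕ) + k ≤ (blk j : ℕ) := by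
      intro k
      induction k with
      | zero =>
        intro i hi j hpos
        have hij : i = j := by
          by_contra hne
          rw [pow_zero, Matrix.one_apply_ne hne] at hpos
          exact lt_irrefl 0 hpos
        subst hij
        omega
      | succ k ih =>
        intro i hi j hpos
        rw [pow_succ', Matrix.mul_apply] at hpos
        have hex2 : ∃ l, 0 < G i l * (G ^ k) l j := by
          by_contra hno
          push_neg at hno
          have h3 : ∑ l, G i l * (G ^ k) l j = 0 :=
            Finset.sum_eq_zero fun l _ => Nat.le_zero.1 (hno l)
          rw [h3] at hpos
          exact lt_irrefl 0 hpos
        obtain ⟨l, hl⟩ := hex2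
        have hGil : 0 < G i l := by
          rcases Nat.eq_zero_or_pos (G i l) with h | h
          · rw [h, zero_mul] at hl; exact absurd hl (lt_irrefl 0)
          · exact h
        have hGkl : 0 < (G ^ k) l j := by
          rcases Nat.eq_zero_or_pos ((G ^ k) l j) with h | h
          · rw [h, mul_zero] at hl; exact absurd hl (lt_irrefl 0)
          · exact h
        have hlI : l ∈ I := hIcl i hi l hGil
        have hne : blk l ≠ blk i := fun h => absurd (hz2 i hi l h) (by omega)
        have hlt : blk i < blk l := by
          rcases lt_or_gt_of_ne hne with h | h
          · exact absurd (hupper i l h) (by omega)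
          · exact h
        have h4 := ih l hlI j hGkl
        have h5 : (blk i : ℕ) < (blk l : ℕ) := hlt
        omega
    have hz3 : ∀ n, m ≤ n → sk G p n = 0 := by
      intro n hn
      simp only [sk]
      apply Finset.sum_eq_zero
      intro i _
      apply Finset.sum_eq_zero
      intro j _
      rcases eq_or_lt_of_le (hp i) with h0 | h0
      · rw [← h0, zero_mul]
      · have hiI := hsupp i h0
        have h6 : (G ^ n) i j = 0 := by
          by_contra hne
          have hpos : 0 < (G ^ n) i j := Nat.pos_of_ne_zero hne
          have h7 := hstrict n i hiI j hpos
          have hj := (blk j).isLt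
          omega
        rw [h6]
        simp
    have hev0 : ∀ᶠ k : ℕ in atTop, u k = 0 := by
      filter_upwards [eventually_ge_atTop (max m 1)] with k hk
      have hk1 : 1 ≤ k := le_trans (le_max_right m 1) hk
      have hkm : m ≤ k := le_trans (le_max_left m 1) hk
      show sk G p k ^ ((k:ℝ)⁻¹) = 0
      rw [hz3 k hkm]
      exact Real.zero_rpow (inv_ne_zero (Nat.cast_ne_zero.2 (by omega)))
    have heq : limsup u atTop = 0 := (limsup_congr hev0).trans (limsup_const 0)
    constructor
    · exact ⟨s₀, (hTmem s₀).1 hs₀T, by rw [heq, hz s₀ hs₀T]⟩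
    · rintro x ⟨s, hcomm, rfl⟩
      rw [heq, hz s ((hTmem s).2 hcomm)]
end

section
/- If the block B_s is communicated by the index r, then there exist a constant c > 0 and an integer N₀ ≥ 1 such that ∑_j (G^k)_{rj} ≥ c · λ_s^k for all k ≥ N₀. (This is the lower-bound step in the paper's proof of the tracial entropy formula for graphs: a vertex communicating with a component G_s emits at least on the order of λ_{G_s}^k paths of length k.) -/
lemma pow_blk_zero' {N m : ℕ} (G : Matrix (Fin N) (Fin N) ℕ) (blk : Fin N → Fin m)
    (hupper : ∀ i j : Fin N, blk j < blk i → G i j = 0) :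
    ∀ (n : ℕ) (i l : Fin N), blk l < blk i → (G ^ n) i l = 0 := by
  intro n
  induction n with
  | zero =>
    intro i l h
    have hne : i ≠ l := fun he => by simp [he] at h
    simp [Matrix.one_apply, hne]
  | succ n ih =>
    intro i l h
    rw [pow_succ, Matrix.mul_apply]
    apply Finset.sum_eq_zero
    intro j _
    by_cases hj : blk j < blk i
    · rw [ih i j hj, zero_mul]
    · rw [hupper j l (lt_of_lt_of_le h (not_lt.mp hj)), mul_zero]

lemma eig_pow' {N m : ℕ} (G : Matrix (Fin N) (Fin N) ℕ) (blk : Fin N → Fin m)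
    (hupper : ∀ i j : Fin N, blk j < blk i → G i j = 0)
    (lam : Fin m → ℝ) (w : Fin N → ℝ)
    (heig : ∀ i : Fin N,
      ∑ j ∈ Finset.univ.filter (fun j => blk j = blk i), (G i j : ℝ) * w j
        = lam (blk i) * w i) :
    ∀ (n : ℕ) (i : Fin N),
      ∑ j ∈ Finset.univ.filter (fun j => blk j = blk i), ((G ^ n) i j : ℝ) * w j
        = lam (blk i) ^ n * w i := by
  intro n
  induction n with
  | zero =>
    intro i
    rw [Finset.sum_eq_single_of_mem i (by simp)]
    · simp [Matrix.one_apply]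
    · intro b _ hb
      rw [pow_zero, Matrix.one_apply_ne (Ne.symm hb)]
      simp
  | succ n ih =>
    intro i
    set S := Finset.univ.filter (fun j => blk j = blk i) with hS
    calc ∑ j ∈ S, ((G ^ (n+1)) i j : ℝ) * w j
        = ∑ j ∈ S, ∑ l, ((G ^ n) i l : ℝ) * ((G l j : ℝ) * w j) := by
          apply Finset.sum_congr rfl; intro j _
          rw [pow_succ, Matrix.mul_apply]
          push_cast
          rw [Finset.sum_mul]
          apply Finset.sum_congr rfl; intro l _; ring
      _ = ∑ l, ((G ^ n) i l : ℝ) * ∑ j ∈ S, (G l j : ℝ) * w j := by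
          rw [Finset.sum_comm]
          apply Finset.sum_congr rfl; intro l _
          rw [Finset.mul_sum]
      _ = ∑ l ∈ S, ((G ^ n) i l : ℝ) * ∑ j ∈ S, (G l j : ℝ) * w j := by
          symm
          apply Finset.sum_subset (Finset.filter_subset _ _)
          intro l _ hl
          have hlne : blk l ≠ blk i := by simpa [hS] using hl
          rcases lt_or_gt_of_ne hlne with h | h
          · rw [pow_blk_zero' G blk hupper n i l h, Nat.cast_zero, zero_mul]
          · have : ∀ j ∈ S, (G l j : ℝ) * w j = 0 := by
              intro j hj
              have hj' : blk j = blk i := by simpa [hS] using hj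
              rw [hupper l j (hj' ▸ h), Nat.cast_zero, zero_mul]
            rw [Finset.sum_eq_zero this, mul_zero]
      _ = ∑ l ∈ S, ((G ^ n) i l : ℝ) * (lam (blk i) * w l) := by
          apply Finset.sum_congr rfl
          intro l hl
          have hl' : blk l = blk i := by simpa [hS] using hl
          congr 1
          rw [← hl', ← heig l]
          apply Finset.sum_congr _ (fun _ _ => rfl)
          simp [hS, hl']
      _ = lam (blk i) * ∑ l ∈ S, ((G ^ n) i l : ℝ) * w l := by
          rw [Finset.mul_sum]; apply Finset.sum_congr rfl; intro l _; ring
      _ = lam (blk i) ^ (n+1) * w i := by rw [ih i]; ring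

/-- if the block `B_s` is communicated by the index `r`, then there are
`c > 0` and `N₀ ≥ 1` with `∑_j (G^k)_{rj} ≥ c · λ_s^k` for all `k ≥ N₀`. -/
theorem stmt_6
    -- Context: `G` is an `N × N` matrix with nonnegative integer entries, block upper
    -- triangular with respect to the partition of `Fin N` into `m` nonempty consecutive
    -- blocks given by the fibers of the monotone surjection `blk`; each diagonal block
    -- `G_s` has eigenvalue `λ_s ≥ 0` with strictly positive eigenvector `w|_{B_s}`.
    (N m : ℕ) (hN : 1 ≤ N) (hm : 1 ≤ m)
    (G : Matrix (Fin N) (Fin N) ℕ)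
    (blk : Fin N → Fin m) (hmono : Monotone blk) (hsurj : Function.Surjective blk)
    (hupper : ∀ i j : Fin N, blk j < blk i → G i j = 0)
    (lam : Fin m → ℝ) (hlam : ∀ s, 0 ≤ lam s)
    (w : Fin N → ℝ) (hw : ∀ i, 0 < w i)
    (heig : ∀ i : Fin N,
      ∑ j ∈ Finset.univ.filter (fun j => blk j = blk i), (G i j : ℝ) * w j
        = lam (blk i) * w i)
    :
    ∀ (r : Fin N) (s : Fin m), CommByIdx G blk s r →
      ∃ c : ℝ, 0 < c ∧ ∃ N₀ : ℕ, 1 ≤ N₀ ∧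
        ∀ k : ℕ, N₀ ≤ k → c * lam s ^ k ≤ ∑ j, ((G ^ k) r j : ℝ) := by
  rintro r s ⟨k₀, j₀, hj₀, hpos⟩
  by_cases hzero : lam s = 0
  · refine ⟨1, one_pos, 1, le_refl 1, fun k hk => ?_⟩
    rw [hzero, zero_pow (by omega), mul_zero]
    positivity
  · have hspos : 0 < lam s := (hlam s).lt_of_ne (Ne.symm hzero)
    set S := Finset.univ.filter (fun j => blk j = blk j₀) with hSdef
    obtain ⟨W, hWmem, hWmax⟩ : ∃ W ∈ Finset.image w Finset.univ, ∀ i : Fin N, w i ≤ W := by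
      obtain ⟨W, hWmem, hW⟩ := Finset.exists_max_image Finset.univ w ⟨j₀, Finset.mem_univ _⟩
      exact ⟨w W, Finset.mem_image_of_mem w hWmem, fun i => hW i (Finset.mem_univ i)⟩
    have hWpos : 0 < W := lt_of_lt_of_le (hw j₀) (hWmax j₀)
    set A := ((G ^ k₀) r j₀ : ℝ) with hAdef
    have hA1 : (1 : ℝ) ≤ A := by exact_mod_cast Nat.one_le_cast.mpr hpos
    have hApos : 0 < A := lt_of_lt_of_le one_pos hA1
    refine ⟨A * w j₀ / (W * lam s ^ k₀),
      div_pos (mul_pos hApos (hw j₀)) (mul_pos hWpos (pow_pos hspos k₀)),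
      k₀ + 1, by omega, fun k hk => ?_⟩
    set n := k - k₀ with hndef
    have hkn : k = k₀ + n := by omega
    -- lower bound for within-block sum
    have hblock : ∑ j ∈ S, ((G ^ n) j₀ j : ℝ) * w j = lam s ^ n * w j₀ := by
      rw [eig_pow' G blk hupper lam w heig n j₀, hj₀]
    have hsumS : lam s ^ n * w j₀ / W ≤ ∑ j ∈ S, ((G ^ n) j₀ j : ℝ) := by
      rw [div_le_iff₀ hWpos, ← hblock, Finset.sum_mul]
      apply Finset.sum_le_sum
      intro j _
      have : ((G ^ n) j₀ j : ℝ) * w j ≤ ((G ^ n) j₀ j : ℝ) * W :=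
        mul_le_mul_of_nonneg_left (hWmax j) (Nat.cast_nonneg _)
      linarith
    -- (G^k) r j ≥ A * (G^n) j₀ j
    have hsplit : ∀ j : Fin N, A * ((G ^ n) j₀ j : ℝ) ≤ ((G ^ k) r j : ℝ) := by
      intro j
      have : (G ^ k₀) r j₀ * (G ^ n) j₀ j ≤ (G ^ k) r j := by
        rw [hkn, pow_add, Matrix.mul_apply]
        exact Finset.single_le_sum (f := fun l => (G ^ k₀) r l * (G ^ n) l j)
          (fun l _ => Nat.zero_le _) (Finset.mem_univ j₀)
      rw [hAdef, ← Nat.cast_mul]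
      exact_mod_cast this
    calc A * w j₀ / (W * lam s ^ k₀) * lam s ^ k
        = A * (lam s ^ n * w j₀ / W) := by
          rw [hkn, pow_add]
          field_simp
      _ ≤ A * ∑ j ∈ S, ((G ^ n) j₀ j : ℝ) :=
          mul_le_mul_of_nonneg_left hsumS (le_of_lt hApos)
      _ = ∑ j ∈ S, A * ((G ^ n) j₀ j : ℝ) := Finset.mul_sum _ _ _
      _ ≤ ∑ j ∈ S, ((G ^ k) r j : ℝ) := Finset.sum_le_sum (fun j _ => hsplit j)
      _ ≤ ∑ j, ((G ^ k) r j : ℝ) :=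
          Finset.sum_le_sum_of_subset_of_nonneg (Finset.filter_subset _ _)
            (fun j _ _ => Nat.cast_nonneg _)
end

section
/- Let r be an index and set λ := max{ λ_s : B_s is communicated by r }. If λ ≥ 1, then there exists a constant C > 0 such that ∑_j (G^k)_{rj} ≤ C · k^m · λ^k for all k ≥ 1. (This is the upper-bound step in the paper's proof of the tracial entropy formula for graphs: decomposing every path of length k from r into segments inside irreducible components joined by at most m transitional edges bounds the number of such paths by a polynomial in k times λ^k.) -/
set_option maxHeartbeats 1000000

/-- if `μ` is the maximum of the eigenvalues `λ_s` over the blocks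
communicated by the index `r`, and `μ ≥ 1`, then there is `C > 0` with
`∑_j (G^k)_{rj} ≤ C · k^m · μ^k` for all `k ≥ 1`. -/
theorem stmt_7
    -- Context: `G` is an `N × N` matrix with nonnegative integer entries, block upper
    -- triangular with respect to the partition of `Fin N` into `m` nonempty consecutive
    -- blocks given by the fibers of the monotone surjection `blk`; each diagonal block
    -- `G_s` has eigenvalue `λ_s ≥ 0` with strictly positive eigenvector `w|_{B_s}`.
    (N m : ℕ) (hN : 1 ≤ N) (hm : 1 ≤ m)
    (G : Matrix (Fin N) (Fin N) ℕ)
    (blk : Fin N → Fin m) (hmono : Monotone blk) (hsurj : Function.Surjective blk)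
    (hupper : ∀ i j : Fin N, blk j < blk i → G i j = 0)
    (lam : Fin m → ℝ) (hlam : ∀ s, 0 ≤ lam s)
    (w : Fin N → ℝ) (hw : ∀ i, 0 < w i)
    (heig : ∀ i : Fin N,
      ∑ j ∈ Finset.univ.filter (fun j => blk j = blk i), (G i j : ℝ) * w j
        = lam (blk i) * w i)
    :
    ∀ (r : Fin N) (μ : ℝ),
      IsGreatest {x : ℝ | ∃ s : Fin m, CommByIdx G blk s r ∧ lam s = x} μ →
      1 ≤ μ →
      ∃ C : ℝ, 0 < C ∧
        ∀ k : ℕ, 1 ≤ k → ∑ j, ((G ^ k) r j : ℝ) ≤ C * (k : ℝ) ^ m * μ ^ k := by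
  classical
  intro r μ hgr hμ
  have hμ0 : (0:ℝ) ≤ μ := le_trans zero_le_one hμ
  have hNE : Nonempty (Fin N) := ⟨⟨0, hN⟩⟩
  -- the weighted row sums
  set v : ℕ → Fin N → ℝ := fun k i => ∑ j, ((G ^ k) i j : ℝ) * w j with hv
  have hv0 : ∀ i, v 0 i = w i := by
    intro i
    show ∑ j, ((G ^ 0) i j : ℝ) * w j = w i
    simp [Matrix.one_apply]
  have hrec : ∀ (k : ℕ) (i : Fin N), v (k+1) i = ∑ l, (G i l : ℝ) * v k l := by
    intro k i
    simp only [hv, pow_succ', Matrix.mul_apply]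
    push_cast
    simp only [Finset.sum_mul, Finset.mul_sum, mul_assoc]
    exact Finset.sum_comm
  -- the reachability predicate
  set P : Fin N → Prop := fun i => ∀ s, CommByIdx G blk s i → lam s ≤ μ with hPdef
  have hP_step : ∀ i l : Fin N, 0 < G i l → P i → P l := by
    intro i l hGil hPi s hs
    obtain ⟨k, j, hbj, hpos⟩ := hs
    refine hPi s ⟨k+1, j, hbj, ?_⟩
    have hle : G i l * (G ^ k) l j ≤ (G ^ (k+1)) i j := by
      rw [pow_succ', Matrix.mul_apply]
      exact Finset.single_le_sum (f := fun t => G i t * (G ^ k) t j)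
        (fun t _ => Nat.zero_le _) (Finset.mem_univ l)
    exact lt_of_lt_of_le (Nat.mul_pos hGil hpos) hle
  have hself : ∀ i : Fin N, P i → lam (blk i) ≤ μ := by
    intro i hPi
    exact hPi (blk i) ⟨0, i, rfl, by simp⟩
  have hPr : P r := fun s hs => hgr.2 ⟨s, hs, rfl⟩
  -- min of w
  set wmin : ℝ := Finset.univ.inf' Finset.univ_nonempty w with hwmindef
  have hwmin_pos : 0 < wmin := by
    rw [hwmindef]
    exact (Finset.lt_inf'_iff _).mpr (fun i _ => hw i)
  have hwmin_le : ∀ i, wmin ≤ w i := fun i => Finset.inf'_le _ (Finset.mem_univ i)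
  -- main inductive bound
  have main : ∀ d : ℕ, ∃ C : ℝ, 1 ≤ C ∧ ∀ i : Fin N, P i → m ≤ d + 1 + (blk i : ℕ) →
      ∀ k : ℕ, v k i ≤ C * ((k:ℝ)+1)^d * μ^k * w i := by
    intro d
    induction d with
    | zero =>
      refine ⟨1, le_refl 1, ?_⟩
      suffices h : ∀ k : ℕ, ∀ i : Fin N, P i → m ≤ 1 + (blk i : ℕ) → v k i ≤ μ^k * w i by
        intro i hPi htop k
        have := h k i hPi (by omega)
        calc v k i ≤ μ^k * w i := this
          _ = 1 * ((k:ℝ)+1)^0 * μ^k * w i := by ring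
      intro k
      induction k with
      | zero =>
        intro i _ _
        rw [hv0 i]
        simp
      | succ k ihk =>
        intro i hPi htop
        rw [hrec k i]
        rw [← Finset.sum_filter_add_sum_filter_not Finset.univ (fun l => blk l = blk i)]
        have hS2 : ∑ l ∈ Finset.univ.filter (fun l => ¬ blk l = blk i),
            (G i l : ℝ) * v k l = 0 := by
          apply Finset.sum_eq_zero
          intro l hl
          have hne : ¬ blk l = blk i := (Finset.mem_filter.mp hl).2
          have hlt : blk l < blk i := by
            have h1 : (blk l : ℕ) < m := (blk l).isLt
            have h2 : (blk l : ℕ) ≤ (blk i : ℕ) := by omega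
            exact lt_of_le_of_ne (by exact Fin.le_def.mpr h2) hne
          rw [hupper i l hlt]
          simp
        rw [hS2, add_zero]
        have hS1 : ∑ l ∈ Finset.univ.filter (fun l => blk l = blk i), (G i l : ℝ) * v k l
            ≤ ∑ l ∈ Finset.univ.filter (fun l => blk l = blk i),
                (G i l : ℝ) * (μ^k * w l) := by
          apply Finset.sum_le_sum
          intro l hl
          have hbl : blk l = blk i := (Finset.mem_filter.mp hl).2
          rcases Nat.eq_zero_or_pos (G i l) with h0 | hpos
          · simp [h0]
          · have hPl := hP_step i l hpos hPi
            have := ihk l hPl (by rw [hbl]; omega)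
            exact mul_le_mul_of_nonneg_left this (Nat.cast_nonneg _)
        calc ∑ l ∈ Finset.univ.filter (fun l => blk l = blk i), (G i l : ℝ) * v k l
            ≤ ∑ l ∈ Finset.univ.filter (fun l => blk l = blk i),
                (G i l : ℝ) * (μ^k * w l) := hS1
          _ = μ^k * ∑ l ∈ Finset.univ.filter (fun l => blk l = blk i),
                (G i l : ℝ) * w l := by
              rw [Finset.mul_sum]
              exact Finset.sum_congr rfl fun l _ => by ring
          _ = μ^k * (lam (blk i) * w i) := by rw [heig i]
          _ ≤ μ^k * (μ * w i) := by
              apply mul_le_mul_of_nonneg_left _ (pow_nonneg hμ0 k)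
              exact mul_le_mul_of_nonneg_right (hself i hPi) (hw i).le
          _ = μ^(k+1) * w i := by ring
    | succ d ih =>
      obtain ⟨C, hC1, hCb⟩ := ih
      have hC0 : (0:ℝ) ≤ C := le_trans zero_le_one hC1
      -- global bound for the off-block mass
      set T : ℝ := ∑ p : Fin N, ∑ l, (G p l : ℝ) * w l with hTdef
      have hT0 : 0 ≤ T := by
        apply Finset.sum_nonneg
        intro p _
        apply Finset.sum_nonneg
        intro l _
        exact mul_nonneg (Nat.cast_nonneg _) (hw l).le
      set B : ℝ := T / wmin + 1 with hBdef
      have hB1 : (1:ℝ) ≤ B := by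
        have : 0 ≤ T / wmin := div_nonneg hT0 hwmin_pos.le
        rw [hBdef]; linarith
      have hoffB : ∀ i : Fin N,
          ∑ l ∈ Finset.univ.filter (fun l => ¬ blk l = blk i), (G i l : ℝ) * w l
            ≤ B * w i := by
        intro i
        have h1 : ∑ l ∈ Finset.univ.filter (fun l => ¬ blk l = blk i),
            (G i l : ℝ) * w l ≤ ∑ l, (G i l : ℝ) * w l := by
          apply Finset.sum_le_sum_of_subset_of_nonneg (Finset.filter_subset _ _)
          intro l _ _
          exact mul_nonneg (Nat.cast_nonneg _) (hw l).le
        have h2 : ∑ l, (G i l : ℝ) * w l ≤ T := by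
          rw [hTdef]
          apply Finset.single_le_sum (f := fun p => ∑ l, (G p l : ℝ) * w l)
            (fun p _ => Finset.sum_nonneg fun l _ =>
              mul_nonneg (Nat.cast_nonneg _) (hw l).le) (Finset.mem_univ i)
        have h3 : T = T / wmin * wmin := (div_mul_cancel₀ T hwmin_pos.ne').symm
        have h4 : T / wmin * wmin ≤ T / wmin * w i :=
          mul_le_mul_of_nonneg_left (hwmin_le i) (div_nonneg hT0 hwmin_pos.le)
        have h5 : T / wmin * w i ≤ B * w i := by
          apply mul_le_mul_of_nonneg_right _ (hw i).le
          rw [hBdef]; linarith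
        exact (h1.trans h2).trans (h3.le.trans (h4.trans h5))
      refine ⟨C * B, le_trans hB1 (by nlinarith), ?_⟩
      have hB0 : (0:ℝ) ≤ B := le_trans zero_le_one hB1
      have hCB0 : (0:ℝ) ≤ C * B := mul_nonneg hC0 hB0
      suffices h : ∀ k : ℕ, ∀ i : Fin N, P i → m ≤ d + 2 + (blk i : ℕ) →
          v k i ≤ C * B * ((k:ℝ)+1)^(d+1) * μ^k * w i by
        intro i hPi hcond k
        exact h k i hPi (by omega)
      intro k
      induction k with
      | zero =>
        intro i _ _
        rw [hv0 i]
        have h1le : (1:ℝ) ≤ C * B := by nlinarith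
        have heq : C * B * (((0:ℕ):ℝ)+1)^(d+1) * μ^0 * w i = (C * B) * w i := by
          norm_num
        rw [heq]
        nlinarith [hw i]
      | succ k ihk =>
        intro i hPi hcond
        rw [hrec k i]
        rw [← Finset.sum_filter_add_sum_filter_not Finset.univ (fun l => blk l = blk i)]
        -- same-block part
        have hS1 : ∑ l ∈ Finset.univ.filter (fun l => blk l = blk i), (G i l : ℝ) * v k l
            ≤ C * B * ((k:ℝ)+1)^(d+1) * μ^(k+1) * w i := by
          have hstep : ∑ l ∈ Finset.univ.filter (fun l => blk l = blk i),
              (G i l : ℝ) * v k l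
              ≤ ∑ l ∈ Finset.univ.filter (fun l => blk l = blk i),
                (G i l : ℝ) * (C * B * ((k:ℝ)+1)^(d+1) * μ^k * w l) := by
            apply Finset.sum_le_sum
            intro l hl
            have hbl : blk l = blk i := (Finset.mem_filter.mp hl).2
            rcases Nat.eq_zero_or_pos (G i l) with h0 | hpos
            · simp [h0]
            · have hPl := hP_step i l hpos hPi
              have := ihk l hPl (by rw [hbl]; omega)
              exact mul_le_mul_of_nonneg_left this (Nat.cast_nonneg _)
          have hfac : ∑ l ∈ Finset.univ.filter (fun l => blk l = blk i),
              (G i l : ℝ) * (C * B * ((k:ℝ)+1)^(d+1) * μ^k * w l)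
              = C * B * ((k:ℝ)+1)^(d+1) * μ^k * (lam (blk i) * w i) := by
            rw [← heig i, Finset.mul_sum]
            exact Finset.sum_congr rfl fun l _ => by ring
          have hlast : C * B * ((k:ℝ)+1)^(d+1) * μ^k * (lam (blk i) * w i)
              ≤ C * B * ((k:ℝ)+1)^(d+1) * μ^(k+1) * w i := by
            have h1 : lam (blk i) * w i ≤ μ * w i :=
              mul_le_mul_of_nonneg_right (hself i hPi) (hw i).le
            have h2 : (0:ℝ) ≤ C * B * ((k:ℝ)+1)^(d+1) * μ^k :=
              mul_nonneg (mul_nonneg hCB0 (by positivity)) (pow_nonneg hμ0 k)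
            calc C * B * ((k:ℝ)+1)^(d+1) * μ^k * (lam (blk i) * w i)
                ≤ C * B * ((k:ℝ)+1)^(d+1) * μ^k * (μ * w i) :=
                  mul_le_mul_of_nonneg_left h1 h2
              _ = C * B * ((k:ℝ)+1)^(d+1) * μ^(k+1) * w i := by ring
          linarith [hstep, hfac.le, hfac.ge]
        -- off-block part
        have hS2 : ∑ l ∈ Finset.univ.filter (fun l => ¬ blk l = blk i), (G i l : ℝ) * v k l
            ≤ C * B * ((k:ℝ)+1)^d * μ^k * w i := by
          have hstep : ∑ l ∈ Finset.univ.filter (fun l => ¬ blk l = blk i),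
              (G i l : ℝ) * v k l
              ≤ ∑ l ∈ Finset.univ.filter (fun l => ¬ blk l = blk i),
                (G i l : ℝ) * (C * ((k:ℝ)+1)^d * μ^k * w l) := by
            apply Finset.sum_le_sum
            intro l hl
            have hne : ¬ blk l = blk i := (Finset.mem_filter.mp hl).2
            rcases Nat.eq_zero_or_pos (G i l) with h0 | hpos
            · simp [h0]
            · have hgt : blk i < blk l := by
                rcases lt_trichotomy (blk l) (blk i) with h | h | h
                · exact absurd (hupper i l h) (by omega)
                · exact absurd h hne
                · exact h
              have hPl := hP_step i l hpos hPi
              have hval : (blk i : ℕ) < (blk l : ℕ) := hgt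
              have := hCb l hPl (by omega) k
              exact mul_le_mul_of_nonneg_left this (Nat.cast_nonneg _)
          have hfac : ∑ l ∈ Finset.univ.filter (fun l => ¬ blk l = blk i),
              (G i l : ℝ) * (C * ((k:ℝ)+1)^d * μ^k * w l)
              = C * ((k:ℝ)+1)^d * μ^k *
                ∑ l ∈ Finset.univ.filter (fun l => ¬ blk l = blk i), (G i l : ℝ) * w l := by
            rw [Finset.mul_sum]
            exact Finset.sum_congr rfl fun l _ => by ring
          have h2 : (0:ℝ) ≤ C * ((k:ℝ)+1)^d * μ^k :=
            mul_nonneg (mul_nonneg hC0 (by positivity)) (pow_nonneg hμ0 k)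
          have hlast : C * ((k:ℝ)+1)^d * μ^k *
              (∑ l ∈ Finset.univ.filter (fun l => ¬ blk l = blk i), (G i l : ℝ) * w l)
              ≤ C * ((k:ℝ)+1)^d * μ^k * (B * w i) :=
            mul_le_mul_of_nonneg_left (hoffB i) h2
          calc ∑ l ∈ Finset.univ.filter (fun l => ¬ blk l = blk i), (G i l : ℝ) * v k l
              ≤ _ := hstep
            _ = _ := hfac
            _ ≤ C * ((k:ℝ)+1)^d * μ^k * (B * w i) := hlast
            _ = C * B * ((k:ℝ)+1)^d * μ^k * w i := by ring
        -- combine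
        have hpow : μ^k ≤ μ^(k+1) := pow_le_pow_right₀ hμ (Nat.le_succ k)
        have hbin : ((k:ℝ)+1)^(d+1) + ((k:ℝ)+1)^d ≤ ((k:ℝ)+2)^(d+1) := by
          have h1 : ((k:ℝ)+1)^d ≤ ((k:ℝ)+2)^d :=
            pow_le_pow_left₀ (by positivity) (by linarith) d
          calc ((k:ℝ)+1)^(d+1) + ((k:ℝ)+1)^d = ((k:ℝ)+2) * ((k:ℝ)+1)^d := by ring
            _ ≤ ((k:ℝ)+2) * ((k:ℝ)+2)^d :=
              mul_le_mul_of_nonneg_left h1 (by positivity)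
            _ = ((k:ℝ)+2)^(d+1) := by ring
        have hw0 : (0:ℝ) ≤ w i := (hw i).le
        have hA0 : (0:ℝ) ≤ ((k:ℝ)+1)^d := by positivity
        have hmid : C * B * ((k:ℝ)+1)^d * μ^k * w i
            ≤ C * B * ((k:ℝ)+1)^d * μ^(k+1) * w i := by
          apply mul_le_mul_of_nonneg_right _ hw0
          exact mul_le_mul_of_nonneg_left hpow
            (mul_nonneg hCB0 (by positivity))
        have hμk1 : (0:ℝ) ≤ μ^(k+1) := pow_nonneg hμ0 _
        have hfin : C * B * ((k:ℝ)+1)^(d+1) * μ^(k+1) * w i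
            + C * B * ((k:ℝ)+1)^d * μ^(k+1) * w i
            ≤ C * B * ((k:ℝ)+2)^(d+1) * μ^(k+1) * w i := by
          have h6 : C * B * μ^(k+1) * w i * (((k:ℝ)+1)^(d+1) + ((k:ℝ)+1)^d)
              ≤ C * B * μ^(k+1) * w i * ((k:ℝ)+2)^(d+1) := by
            exact mul_le_mul_of_nonneg_left hbin
              (mul_nonneg (mul_nonneg hCB0 (pow_nonneg hμ0 _)) (hw i).le)
          calc C * B * ((k:ℝ)+1)^(d+1) * μ^(k+1) * w i
              + C * B * ((k:ℝ)+1)^d * μ^(k+1) * w i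
              = C * B * μ^(k+1) * w i * (((k:ℝ)+1)^(d+1) + ((k:ℝ)+1)^d) := by ring
            _ ≤ C * B * μ^(k+1) * w i * ((k:ℝ)+2)^(d+1) := h6
            _ = C * B * ((k:ℝ)+2)^(d+1) * μ^(k+1) * w i := by ring
        have hgoal : (((k+1:ℕ):ℝ)+1) = ((k:ℝ)+2) := by push_cast; ring
        rw [hgoal]
        linarith
  -- assemble
  obtain ⟨C, hC1, hCb⟩ := main (m - 1)
  have hC0 : (0:ℝ) ≤ C := le_trans zero_le_one hC1
  have hCfin : (0:ℝ) < C * 2^(m-1) * w r / wmin :=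
    div_pos (mul_pos (mul_pos (lt_of_lt_of_le one_pos hC1)
      (pow_pos two_pos _)) (hw r)) hwmin_pos
  refine ⟨C * 2^(m-1) * w r / wmin, hCfin, ?_⟩
  intro k hk
  have hvb := hCb r hPr (by omega) k
  have hk1 : (1:ℝ) ≤ (k:ℝ) := by exact_mod_cast hk
  have hkp : ((k:ℝ)+1)^(m-1) ≤ 2^(m-1) * (k:ℝ)^m := by
    calc ((k:ℝ)+1)^(m-1) ≤ (2*(k:ℝ))^(m-1) :=
        pow_le_pow_left₀ (by positivity) (by linarith) _
      _ = 2^(m-1) * (k:ℝ)^(m-1) := mul_pow 2 _ _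
      _ ≤ 2^(m-1) * (k:ℝ)^m := by
          apply mul_le_mul_of_nonneg_left _ (by positivity)
          exact pow_le_pow_right₀ hk1 (Nat.sub_le m 1)
  have h1 : (∑ j, ((G^k) r j : ℝ)) * wmin ≤ v k r := by
    rw [hv, Finset.sum_mul]
    apply Finset.sum_le_sum
    intro j _
    exact mul_le_mul_of_nonneg_left (hwmin_le j) (Nat.cast_nonneg _)
  have h2 : v k r ≤ (C * 2^(m-1) * w r / wmin * (k:ℝ)^m * μ^k) * wmin := by
    have heq : (C * 2^(m-1) * w r / wmin * (k:ℝ)^m * μ^k) * wmin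
        = C * (2^(m-1) * (k:ℝ)^m) * μ^k * w r := by
      field_simp
    rw [heq]
    calc v k r ≤ C * ((k:ℝ)+1)^(m-1) * μ^k * w r := hvb
      _ ≤ C * (2^(m-1) * (k:ℝ)^m) * μ^k * w r := by
          apply mul_le_mul_of_nonneg_right _ (hw r).le
          apply mul_le_mul_of_nonneg_right _ (pow_nonneg hμ0 k)
          exact mul_le_mul_of_nonneg_left hkp hC0
  exact le_of_mul_le_mul_right (h1.trans h2) hwmin_pos
end

section
/- If p is a probability vector and λ* := max{ λ_s : B_s is communicated by some index in the support of p } satisfies λ* ≥ 1, then there exist constants M₁, M₂ > 0 and an integer N₀ ≥ 1 such that M₁ · λ*^k ≤ s_k(p) ≤ M₂ · k^m · λ*^k for all k ≥ N₀. (This two-sided quantitative bound is established in the paper's proof of the convergence criterion for the series c_{τ,β}.) -/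
/-- Auxiliary: `(G^k w)_j` as a real number. -/
def auxV {N : ℕ} (G : Matrix (Fin N) (Fin N) ℕ) (w : Fin N → ℝ) (k : ℕ) (j : Fin N) : ℝ :=
  ∑ l, ((G ^ k) j l : ℝ) * w l

lemma auxV_zero {N : ℕ} (G : Matrix (Fin N) (Fin N) ℕ) (w : Fin N → ℝ) (j : Fin N) :
    auxV G w 0 j = w j := by
  simp [auxV, Matrix.one_apply]

lemma auxV_succ {N : ℕ} (G : Matrix (Fin N) (Fin N) ℕ) (w : Fin N → ℝ) (k : ℕ) (j : Fin N) :
    auxV G w (k + 1) j = ∑ l, (G j l : ℝ) * auxV G w k l := by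
  simp only [auxV, pow_succ', Matrix.mul_apply]
  push_cast
  simp only [Finset.sum_mul, Finset.mul_sum, mul_assoc]
  exact Finset.sum_comm

lemma auxV_nonneg {N : ℕ} (G : Matrix (Fin N) (Fin N) ℕ) (w : Fin N → ℝ)
    (hw : ∀ i, 0 ≤ w i) (k : ℕ) (j : Fin N) : 0 ≤ auxV G w k j :=
  Finset.sum_nonneg fun l _ => mul_nonneg (Nat.cast_nonneg _) (hw l)

lemma auxV_low {N m : ℕ} (G : Matrix (Fin N) (Fin N) ℕ) (blk : Fin N → Fin m)
    (lam : Fin m → ℝ) (hlam : ∀ s, 0 ≤ lam s)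
    (w : Fin N → ℝ) (hw : ∀ i, 0 < w i)
    (heig : ∀ i : Fin N,
      ∑ j ∈ Finset.univ.filter (fun j => blk j = blk i), (G i j : ℝ) * w j
        = lam (blk i) * w i) :
    ∀ t : ℕ, ∀ j : Fin N, lam (blk j) ^ t * w j ≤ auxV G w t j := by
  intro t
  induction t with
  | zero => intro j; simp [auxV_zero]
  | succ t ih =>
    intro j
    rw [auxV_succ]
    rw [← Finset.sum_filter_add_sum_filter_not Finset.univ (fun l => blk l = blk j)]
    have h1 : lam (blk j) ^ (t + 1) * w j
        = ∑ l ∈ Finset.univ.filter (fun l => blk l = blk j),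
            (G j l : ℝ) * (lam (blk l) ^ t * w l) := by
      rw [pow_succ]
      calc lam (blk j) ^ t * lam (blk j) * w j
          = lam (blk j) ^ t * (lam (blk j) * w j) := by ring
        _ = lam (blk j) ^ t * ∑ l ∈ Finset.univ.filter (fun l => blk l = blk j),
              (G j l : ℝ) * w l := by rw [heig j]
        _ = _ := by
            rw [Finset.mul_sum]
            refine Finset.sum_congr rfl fun l hl => ?_
            have : blk l = blk j := (Finset.mem_filter.mp hl).2
            rw [this]; ring
    rw [h1]
    have h2 : ∑ l ∈ Finset.univ.filter (fun l => blk l = blk j),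
        (G j l : ℝ) * (lam (blk l) ^ t * w l)
        ≤ ∑ l ∈ Finset.univ.filter (fun l => blk l = blk j), (G j l : ℝ) * auxV G w t l :=
      Finset.sum_le_sum fun l _ =>
        mul_le_mul_of_nonneg_left (ih l) (Nat.cast_nonneg _)
    refine h2.trans (le_add_of_nonneg_right ?_)
    exact Finset.sum_nonneg fun l _ =>
      mul_nonneg (Nat.cast_nonneg _) (auxV_nonneg G w (fun i => (hw i).le) t l)

lemma aux_reach_step {N : ℕ} (G : Matrix (Fin N) (Fin N) ℕ) (p : Fin N → ℝ)
    {j l : Fin N} (hj : ∃ i, 0 < p i ∧ ∃ k, 0 < (G ^ k) i j) (hGl : 0 < G j l) :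
    ∃ i, 0 < p i ∧ ∃ k, 0 < (G ^ k) i l := by
  obtain ⟨i, hpi, k, hk⟩ := hj
  refine ⟨i, hpi, k + 1, ?_⟩
  have : (G ^ k) i j * G j l ≤ (G ^ (k + 1)) i l := by
    rw [pow_succ, Matrix.mul_apply]
    exact Finset.single_le_sum (f := fun t => (G ^ k) i t * G t l)
      (fun t _ => Nat.zero_le _) (Finset.mem_univ j)
  exact lt_of_lt_of_le (Nat.mul_pos hk hGl) this

lemma auxV_up {N m : ℕ} (G : Matrix (Fin N) (Fin N) ℕ) (blk : Fin N → Fin m)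
    (hupper : ∀ i j : Fin N, blk j < blk i → G i j = 0)
    (lam : Fin m → ℝ)
    (w : Fin N → ℝ) (hw : ∀ i, 0 < w i)
    (heig : ∀ i : Fin N,
      ∑ j ∈ Finset.univ.filter (fun j => blk j = blk i), (G i j : ℝ) * w j
        = lam (blk i) * w i)
    (μ : ℝ) (hμ1 : 1 ≤ μ)
    (R : Fin N → Prop) (hRstep : ∀ j l, R j → 0 < G j l → R l)
    (hRlam : ∀ j, R j → lam (blk j) ≤ μ)
    (C : ℝ) (hC1 : 1 ≤ C)
    (hS : ∀ j : Fin N,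
      (∑ l ∈ Finset.univ.filter (fun l => ¬ blk l = blk j), (G j l : ℝ) * w l)
        ≤ (C - 1) * w j) :
    ∀ k : ℕ, ∀ j : Fin N, R j →
      auxV G w k j
        ≤ C ^ (m - (blk j : ℕ)) * ((k : ℝ) + 1) ^ (m - 1 - (blk j : ℕ)) * μ ^ k * w j := by
  have hμ0 : (0:ℝ) < μ := lt_of_lt_of_le one_pos hμ1
  have hC0 : (0:ℝ) < C := lt_of_lt_of_le one_pos hC1
  intro k
  induction k with
  | zero =>
    intro j _
    rw [auxV_zero]
    have h1 : (1:ℝ) ≤ C ^ (m - (blk j : ℕ)) := one_le_pow₀ hC1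
    simp only [Nat.cast_zero, zero_add, one_pow, pow_zero, mul_one]
    nlinarith [hw j]
  | succ k ih =>
    intro j hRj
    have hbj : (blk j : ℕ) < m := (blk j).isLt
    rw [auxV_succ,
      ← Finset.sum_filter_add_sum_filter_not Finset.univ (fun l => blk l = blk j)]
    set d : ℕ := m - 1 - (blk j : ℕ) with hd
    have hA1 : ∑ l ∈ Finset.univ.filter (fun l => blk l = blk j), (G j l : ℝ) * auxV G w k l
        ≤ C ^ (m - (blk j : ℕ)) * ((k : ℝ) + 1) ^ d * μ ^ k * (μ * w j) := by
      have step : ∑ l ∈ Finset.univ.filter (fun l => blk l = blk j),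
          (G j l : ℝ) * auxV G w k l
          ≤ ∑ l ∈ Finset.univ.filter (fun l => blk l = blk j),
            (G j l : ℝ) * (C ^ (m - (blk j : ℕ)) * ((k : ℝ) + 1) ^ d * μ ^ k * w l) := by
        refine Finset.sum_le_sum fun l hl => ?_
        rcases Nat.eq_zero_or_pos (G j l) with h0 | hpos
        · simp [h0]
        · have hRl : R l := hRstep j l hRj hpos
          have hbl : blk l = blk j := (Finset.mem_filter.mp hl).2
          have := ih l hRl
          rw [hbl] at this
          exact mul_le_mul_of_nonneg_left this (Nat.cast_nonneg _)
      refine step.trans ?_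
      have heq1 : ∑ l ∈ Finset.univ.filter (fun l => blk l = blk j),
          (G j l : ℝ) * (C ^ (m - (blk j : ℕ)) * ((k : ℝ) + 1) ^ d * μ ^ k * w l)
          = C ^ (m - (blk j : ℕ)) * ((k : ℝ) + 1) ^ d * μ ^ k * (lam (blk j) * w j) := by
        rw [← heig j, Finset.mul_sum]
        exact Finset.sum_congr rfl fun l _ => by ring
      rw [heq1]
      have hpre : (0:ℝ) ≤ C ^ (m - (blk j : ℕ)) * ((k : ℝ) + 1) ^ d * μ ^ k := by positivity
      have hlw : lam (blk j) * w j ≤ μ * w j :=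
        mul_le_mul_of_nonneg_right (hRlam j hRj) (hw j).le
      exact mul_le_mul_of_nonneg_left hlw hpre
    rcases Nat.lt_or_ge (blk j : ℕ) (m - 1) with hlt | hge
    · have hd1 : 1 ≤ d := by omega
      have hA2 : ∑ l ∈ Finset.univ.filter (fun l => ¬ blk l = blk j),
          (G j l : ℝ) * auxV G w k l
          ≤ C ^ (m - (blk j : ℕ) - 1) * ((k : ℝ) + 1) ^ (d - 1) * μ ^ k * ((C - 1) * w j) := by
        have step : ∑ l ∈ Finset.univ.filter (fun l => ¬ blk l = blk j),
            (G j l : ℝ) * auxV G w k l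
            ≤ ∑ l ∈ Finset.univ.filter (fun l => ¬ blk l = blk j),
              (G j l : ℝ) * (C ^ (m - (blk j : ℕ) - 1) * ((k : ℝ) + 1) ^ (d - 1) * μ ^ k * w l) := by
          refine Finset.sum_le_sum fun l hl => ?_
          rcases Nat.eq_zero_or_pos (G j l) with h0 | hpos
          · simp [h0]
          · have hRl : R l := hRstep j l hRj hpos
            have hne : ¬ blk l = blk j := (Finset.mem_filter.mp hl).2
            have hgt : blk j < blk l := by
              rcases lt_trichotomy (blk l) (blk j) with h | h | h
              · exact absurd (hupper j l h) (by omega)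
              · exact absurd h hne
              · exact h
            have hble : (blk j : ℕ) + 1 ≤ (blk l : ℕ) := hgt
            have h1 := ih l hRl
            have h2 : C ^ (m - (blk l : ℕ)) ≤ C ^ (m - (blk j : ℕ) - 1) :=
              pow_le_pow_right₀ hC1 (by omega)
            have h3 : ((k : ℝ) + 1) ^ (m - 1 - (blk l : ℕ)) ≤ ((k : ℝ) + 1) ^ (d - 1) :=
              pow_le_pow_right₀ (by norm_num) (by omega)
            have h4 : auxV G w k l ≤ C ^ (m - (blk j : ℕ) - 1) * ((k : ℝ) + 1) ^ (d - 1)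
                * μ ^ k * w l := by
              refine h1.trans ?_
              have hmm : C ^ (m - (blk l : ℕ)) * ((k : ℝ) + 1) ^ (m - 1 - (blk l : ℕ))
                  ≤ C ^ (m - (blk j : ℕ) - 1) * ((k : ℝ) + 1) ^ (d - 1) :=
                mul_le_mul h2 h3 (by positivity) (by positivity)
              have hrest : (0:ℝ) ≤ μ ^ k * w l := mul_nonneg (pow_nonneg hμ0.le k) (hw l).le
              calc C ^ (m - (blk l : ℕ)) * ((k : ℝ) + 1) ^ (m - 1 - (blk l : ℕ)) * μ ^ k * w l
                  = (C ^ (m - (blk l : ℕ)) * ((k : ℝ) + 1) ^ (m - 1 - (blk l : ℕ))) * (μ ^ k * w l) := by ring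
                _ ≤ (C ^ (m - (blk j : ℕ) - 1) * ((k : ℝ) + 1) ^ (d - 1)) * (μ ^ k * w l) :=
                    mul_le_mul_of_nonneg_right hmm hrest
                _ = _ := by ring
            exact mul_le_mul_of_nonneg_left h4 (Nat.cast_nonneg _)
        refine step.trans ?_
        have heq : ∑ l ∈ Finset.univ.filter (fun l => ¬ blk l = blk j),
            (G j l : ℝ) * (C ^ (m - (blk j : ℕ) - 1) * ((k : ℝ) + 1) ^ (d - 1) * μ ^ k * w l)
            = C ^ (m - (blk j : ℕ) - 1) * ((k : ℝ) + 1) ^ (d - 1) * μ ^ k *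
              ∑ l ∈ Finset.univ.filter (fun l => ¬ blk l = blk j), (G j l : ℝ) * w l := by
          rw [Finset.mul_sum]
          exact Finset.sum_congr rfl fun l _ => by ring
        rw [heq]
        have hpre : (0:ℝ) ≤ C ^ (m - (blk j : ℕ) - 1) * ((k : ℝ) + 1) ^ (d - 1) * μ ^ k := by
          positivity
        exact mul_le_mul_of_nonneg_left (hS j) hpre
      have hfin : C ^ (m - (blk j : ℕ)) * ((k : ℝ) + 1) ^ d * μ ^ k * (μ * w j)
          + C ^ (m - (blk j : ℕ) - 1) * ((k : ℝ) + 1) ^ (d - 1) * μ ^ k * ((C - 1) * w j)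
          ≤ C ^ (m - (blk j : ℕ)) * (((k:ℕ) + 1 : ℕ) + 1 : ℝ) ^ d * μ ^ (k + 1) * w j := by
        have hCC : (C - 1) * C ^ (m - (blk j : ℕ) - 1) ≤ C ^ (m - (blk j : ℕ)) := by
          have hCe : C * C ^ (m - (blk j : ℕ) - 1) = C ^ (m - (blk j : ℕ)) := by
            rw [← pow_succ']
            congr 1
            omega
          nlinarith [pow_pos hC0 (m - (blk j : ℕ) - 1)]
        have hμk : μ ^ k ≤ μ ^ (k + 1) := by
          calc μ ^ k = μ ^ k * 1 := by ring
            _ ≤ μ ^ k * μ := by nlinarith [pow_pos hμ0 k]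
            _ = μ ^ (k + 1) := by rw [pow_succ]
        obtain ⟨e, he⟩ : ∃ e, d = e + 1 := ⟨d - 1, by omega⟩
        have hpowsum : ((k : ℝ) + 1) ^ d + ((k : ℝ) + 1) ^ (d - 1) ≤ ((k : ℝ) + 2) ^ d := by
          rw [he]
          have h5 : ((k : ℝ) + 1) ^ e ≤ ((k : ℝ) + 2) ^ e :=
            pow_le_pow_left₀ (by positivity) (by linarith) e
          have h6 : (0:ℝ) < ((k : ℝ) + 1) ^ e := by positivity
          simp only [pow_succ, Nat.add_sub_cancel]
          nlinarith
        have key : C ^ (m - (blk j : ℕ)) * ((k : ℝ) + 1) ^ d * μ ^ (k+1) * w j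
            + C ^ (m - (blk j : ℕ)) * ((k : ℝ) + 1) ^ (d - 1) * μ ^ (k+1) * w j
            ≤ C ^ (m - (blk j : ℕ)) * ((k:ℝ) + 2) ^ d * μ ^ (k + 1) * w j := by
          have hfac : (0:ℝ) ≤ C ^ (m - (blk j : ℕ)) * μ ^ (k+1) * w j := mul_nonneg (mul_nonneg (pow_nonneg hC0.le _) (pow_nonneg hμ0.le _)) (hw j).le
          calc C ^ (m - (blk j : ℕ)) * ((k : ℝ) + 1) ^ d * μ ^ (k+1) * w j
              + C ^ (m - (blk j : ℕ)) * ((k : ℝ) + 1) ^ (d - 1) * μ ^ (k+1) * w j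
              = (C ^ (m - (blk j : ℕ)) * μ ^ (k+1) * w j)
                * (((k : ℝ) + 1) ^ d + ((k : ℝ) + 1) ^ (d - 1)) := by ring
            _ ≤ (C ^ (m - (blk j : ℕ)) * μ ^ (k+1) * w j) * ((k : ℝ) + 2) ^ d :=
                mul_le_mul_of_nonneg_left hpowsum hfac
            _ = _ := by ring
        have t1 : C ^ (m - (blk j : ℕ)) * ((k : ℝ) + 1) ^ d * μ ^ k * (μ * w j)
            = C ^ (m - (blk j : ℕ)) * ((k : ℝ) + 1) ^ d * μ ^ (k+1) * w j := by
          rw [pow_succ]; ring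
        have t2 : C ^ (m - (blk j : ℕ) - 1) * ((k : ℝ) + 1) ^ (d - 1) * μ ^ k * ((C - 1) * w j)
            ≤ C ^ (m - (blk j : ℕ)) * ((k : ℝ) + 1) ^ (d - 1) * μ ^ (k+1) * w j := by
          have e1 : C ^ (m - (blk j : ℕ) - 1) * ((k : ℝ) + 1) ^ (d - 1) * μ ^ k * ((C - 1) * w j)
              = ((C - 1) * C ^ (m - (blk j : ℕ) - 1)) * (((k : ℝ) + 1) ^ (d - 1) * w j) * μ ^ k := by
            ring
          have e2 : C ^ (m - (blk j : ℕ)) * ((k : ℝ) + 1) ^ (d - 1) * μ ^ (k+1) * w j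
              = C ^ (m - (blk j : ℕ)) * (((k : ℝ) + 1) ^ (d - 1) * w j) * μ ^ (k+1) := by ring
          rw [e1, e2]
          have hb : (0:ℝ) ≤ ((k : ℝ) + 1) ^ (d - 1) * w j := mul_nonneg (by positivity) (hw j).le
          exact mul_le_mul (mul_le_mul_of_nonneg_right hCC hb) hμk (by positivity)
            (mul_nonneg (pow_nonneg hC0.le _) hb)
        rw [t1]
        push_cast
        calc C ^ (m - (blk j : ℕ)) * ((k : ℝ) + 1) ^ d * μ ^ (k+1) * w j
            + C ^ (m - (blk j : ℕ) - 1) * ((k : ℝ) + 1) ^ (d - 1) * μ ^ k * ((C - 1) * w j)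
            ≤ C ^ (m - (blk j : ℕ)) * ((k : ℝ) + 1) ^ d * μ ^ (k+1) * w j
              + C ^ (m - (blk j : ℕ)) * ((k : ℝ) + 1) ^ (d - 1) * μ ^ (k+1) * w j := by
              linarith [t2]
          _ ≤ C ^ (m - (blk j : ℕ)) * ((k:ℝ) + 2) ^ d * μ ^ (k + 1) * w j := key
          _ = C ^ (m - (blk j : ℕ)) * ((k:ℝ) + 1 + 1) ^ d * μ ^ (k + 1) * w j := by ring_nf
      have := add_le_add hA1 hA2
      refine this.trans ?_
      have hcast : (((k:ℕ) + 1 : ℕ) + 1 : ℝ) = ((k + 1 : ℕ) : ℝ) + 1 := by push_cast; ring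
      rw [← hcast]
      exact hfin
    · have hA2 : ∑ l ∈ Finset.univ.filter (fun l => ¬ blk l = blk j),
          (G j l : ℝ) * auxV G w k l = 0 := by
        refine Finset.sum_eq_zero fun l hl => ?_
        have hne : ¬ blk l = blk j := (Finset.mem_filter.mp hl).2
        have hltl : blk l < blk j := by
          have h1 : (blk l : ℕ) < m := (blk l).isLt
          have h2 : (blk l : ℕ) ≠ (blk j : ℕ) := fun h => hne (Fin.ext h)
          exact Fin.lt_def.mpr (by omega)
        rw [hupper j l hltl]
        simp
      rw [hA2, add_zero]
      have hd0 : d = 0 := by omega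
      refine hA1.trans ?_
      rw [hd0]
      simp only [pow_zero, mul_one]
      rw [pow_succ]
      apply le_of_eq
      ring

/-- if `p` is a probability vector and `μ = λ*` is the maximum of the
eigenvalues `λ_s` over the blocks communicated by the support of `p`, with `μ ≥ 1`,
then there are `M₁, M₂ > 0` and `N₀ ≥ 1` such that
`M₁ · μ^k ≤ s_k(p) ≤ M₂ · k^m · μ^k` for all `k ≥ N₀`. -/
theorem stmt_8
    -- Context: `G` is an `N × N` matrix with nonnegative integer entries, block upper
    -- triangular with respect to the partition of `Fin N` into `m` nonempty consecutive
    -- blocks given by the fibers of the monotone surjection `blk`; each diagonal block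
    -- `G_s` has eigenvalue `λ_s ≥ 0` with strictly positive eigenvector `w|_{B_s}`.
    (N m : ℕ) (hN : 1 ≤ N) (hm : 1 ≤ m)
    (G : Matrix (Fin N) (Fin N) ℕ)
    (blk : Fin N → Fin m) (hmono : Monotone blk) (hsurj : Function.Surjective blk)
    (hupper : ∀ i j : Fin N, blk j < blk i → G i j = 0)
    (lam : Fin m → ℝ) (hlam : ∀ s, 0 ≤ lam s)
    (w : Fin N → ℝ) (hw : ∀ i, 0 < w i)
    (heig : ∀ i : Fin N,
      ∑ j ∈ Finset.univ.filter (fun j => blk j = blk i), (G i j : ℝ) * w j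
        = lam (blk i) * w i)
    :
    ∀ p : Fin N → ℝ, (∀ i, 0 ≤ p i) → (∑ i, p i = 1) →
      ∀ μ : ℝ,
        IsGreatest
          {x : ℝ | ∃ s : Fin m, (∃ i : Fin N, 0 < p i ∧ CommByIdx G blk s i) ∧ lam s = x}
          μ →
        1 ≤ μ →
        ∃ M₁ M₂ : ℝ, 0 < M₁ ∧ 0 < M₂ ∧ ∃ N₀ : ℕ, 1 ≤ N₀ ∧
          ∀ k : ℕ, N₀ ≤ k →
            M₁ * μ ^ k ≤ sk G p k ∧ sk G p k ≤ M₂ * (k : ℝ) ^ m * μ ^ k := by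
  intro p hp hps μ hμgr hμ1
  obtain ⟨hμmem, hub⟩ := hμgr
  obtain ⟨s0, ⟨i0, hpi0, k0, j0, hblkj0, hGk0⟩, hlams0⟩ := hμmem
  have hμ0 : (0:ℝ) < μ := lt_of_lt_of_le one_pos hμ1
  haveI : Nonempty (Fin N) := ⟨⟨0, hN⟩⟩
  obtain ⟨wmin, hwmindef⟩ : ∃ x : ℝ, x = Finset.univ.inf' Finset.univ_nonempty w := ⟨_, rfl⟩
  obtain ⟨wmax, hwmaxdef⟩ : ∃ x : ℝ, x = Finset.univ.sup' Finset.univ_nonempty w := ⟨_, rfl⟩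
  have hwmin : 0 < wmin := by
    rw [hwmindef]
    exact (Finset.lt_inf'_iff _).mpr fun i _ => hw i
  have hwminle : ∀ i, wmin ≤ w i := fun i => hwmindef ▸ Finset.inf'_le _ (Finset.mem_univ i)
  have hwmaxle : ∀ i, w i ≤ wmax := fun i => hwmaxdef ▸ Finset.le_sup' _ (Finset.mem_univ i)
  have hwmax : 0 < wmax := lt_of_lt_of_le (hw j0) (hwmaxle j0)
  obtain ⟨T, hTdef⟩ : ∃ x : ℝ, x = ∑ j, ∑ l, (G j l : ℝ) * w l := ⟨_, rfl⟩
  have hT0 : 0 ≤ T := hTdef ▸ Finset.sum_nonneg fun j _ => Finset.sum_nonneg fun l _ =>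
      mul_nonneg (Nat.cast_nonneg _) (hw l).le
  obtain ⟨C, hCdef⟩ : ∃ x : ℝ, x = 1 + T / wmin := ⟨_, rfl⟩
  have hC1 : 1 ≤ C := by
    have h0 : 0 ≤ T / wmin := div_nonneg hT0 hwmin.le
    rw [hCdef]
    linarith
  have hC0 : (0:ℝ) < C := lt_of_lt_of_le one_pos hC1
  have hS : ∀ j : Fin N,
      (∑ l ∈ Finset.univ.filter (fun l => ¬ blk l = blk j), (G j l : ℝ) * w l)
        ≤ (C - 1) * w j := by
    intro j
    have h1 : (∑ l ∈ Finset.univ.filter (fun l => ¬ blk l = blk j), (G j l : ℝ) * w l)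
        ≤ ∑ l, (G j l : ℝ) * w l :=
      Finset.sum_le_sum_of_subset_of_nonneg (Finset.filter_subset _ _)
        (fun l _ _ => mul_nonneg (Nat.cast_nonneg _) (hw l).le)
    have h2 : (∑ l, (G j l : ℝ) * w l) ≤ T := hTdef ▸ Finset.single_le_sum (f := fun j => ∑ l, (G j l : ℝ) * w l)
        (fun j _ => Finset.sum_nonneg fun l _ => mul_nonneg (Nat.cast_nonneg _) (hw l).le)
        (Finset.mem_univ j)
    have h3 : (C - 1) * wmin = T := by
      rw [hCdef]
      field_simp
      ring
    have h4 : (C - 1) * wmin ≤ (C - 1) * w j := by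
      have hC1' : 0 ≤ C - 1 := by linarith
      exact mul_le_mul_of_nonneg_left (hwminle j) hC1'
    linarith
  have hRstep : ∀ j l, (∃ i, 0 < p i ∧ ∃ k', 0 < (G ^ k') i j) → 0 < G j l → (∃ i, 0 < p i ∧ ∃ k', 0 < (G ^ k') i l) := fun j l hj hG => aux_reach_step G p hj hG
  have hRlam : ∀ j, (∃ i, 0 < p i ∧ ∃ k', 0 < (G ^ k') i j) → lam (blk j) ≤ μ := by
    rintro j ⟨i, hpi, k, hk⟩
    exact hub ⟨blk j, ⟨i, hpi, k, j, rfl, hk⟩, rfl⟩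
  have hup := auxV_up G blk hupper lam w hw heig μ hμ1 (fun j => ∃ i, 0 < p i ∧ ∃ k', 0 < (G ^ k') i j) hRstep hRlam C hC1 hS
  have hlamj0 : lam (blk j0) = μ := by rw [hblkj0, hlams0]
  refine ⟨p i0 * w j0 / (wmax * μ ^ k0), C ^ m * 2 ^ m * wmax / wmin, ?_, ?_, k0 + 1, ?_, ?_⟩
  · exact div_pos (mul_pos hpi0 (hw j0)) (mul_pos hwmax (pow_pos hμ0 k0))
  · have h2 : (0:ℝ) < C ^ m * 2 ^ m * wmax :=
      mul_pos (mul_pos (pow_pos hC0 m) (by positivity)) hwmax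
    exact div_pos h2 hwmin
  · omega
  · intro k hk
    have hk0le : k0 ≤ k := by omega
    have hk1 : (1:ℝ) ≤ (k:ℝ) := by exact_mod_cast Nat.one_le_iff_ne_zero.mpr (by omega)
    have hsk : sk G p k = ∑ i, p i * ∑ j, ((G ^ k) i j : ℝ) := by
      simp [sk, Finset.mul_sum]
    constructor
    · -- LOWER BOUND
      have h4 : μ ^ (k - k0) * w j0 ≤ auxV G w (k - k0) j0 := by
        have := auxV_low G blk lam hlam w hw heig (k - k0) j0
        rwa [hlamj0] at this
      have h3 : ((G ^ k0) i0 j0 : ℝ) * auxV G w (k - k0) j0 ≤ auxV G w k i0 := by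
        have hpowk : G ^ k = G ^ k0 * G ^ (k - k0) := by
          rw [← pow_add]
          congr 1
          omega
        unfold auxV
        rw [Finset.mul_sum]
        refine Finset.sum_le_sum fun l _ => ?_
        have hmono : (G ^ k0) i0 j0 * (G ^ (k - k0)) j0 l ≤ (G ^ k) i0 l := by
          rw [hpowk, Matrix.mul_apply]
          exact Finset.single_le_sum (f := fun t => (G ^ k0) i0 t * (G ^ (k - k0)) t l)
            (fun t _ => Nat.zero_le _) (Finset.mem_univ j0)
        have hcast : (((G ^ k0) i0 j0 * (G ^ (k - k0)) j0 l : ℕ) : ℝ) ≤ ((G ^ k) i0 l : ℝ) := by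
          exact_mod_cast hmono
        calc ((G ^ k0) i0 j0 : ℝ) * (((G ^ (k - k0)) j0 l : ℝ) * w l)
            = ((G ^ k0) i0 j0 * (G ^ (k - k0)) j0 l : ℕ) * w l := by push_cast; ring
          _ ≤ ((G ^ k) i0 l : ℝ) * w l := mul_le_mul_of_nonneg_right hcast (hw l).le
      have h5 : (1:ℝ) ≤ ((G ^ k0) i0 j0 : ℝ) := by exact_mod_cast hGk0
      have h2 : auxV G w k i0 ≤ (∑ j, ((G ^ k) i0 j : ℝ)) * wmax := by
        unfold auxV
        rw [Finset.sum_mul]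
        exact Finset.sum_le_sum fun l _ =>
          mul_le_mul_of_nonneg_left (hwmaxle l) (Nat.cast_nonneg _)
      have hA : μ ^ (k - k0) * w j0 ≤ (∑ j, ((G ^ k) i0 j : ℝ)) * wmax := by
        calc μ ^ (k - k0) * w j0 ≤ auxV G w (k - k0) j0 := h4
          _ ≤ ((G ^ k0) i0 j0 : ℝ) * auxV G w (k - k0) j0 :=
              le_mul_of_one_le_left (auxV_nonneg G w (fun i => (hw i).le) _ _) h5
          _ ≤ auxV G w k i0 := h3
          _ ≤ _ := h2
      have hμsplit : μ ^ k = μ ^ k0 * μ ^ (k - k0) := by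
        rw [← pow_add]
        congr 1
        omega
      have hstep1 : p i0 * w j0 / (wmax * μ ^ k0) * μ ^ k
          = p i0 * ((μ ^ (k - k0) * w j0) / wmax) := by
        rw [hμsplit]
        have hμk0 : (μ:ℝ) ^ k0 ≠ 0 := (pow_pos hμ0 k0).ne'
        field_simp
      rw [hstep1, hsk]
      have hstep2 : p i0 * ((μ ^ (k - k0) * w j0) / wmax) ≤ p i0 * ∑ j, ((G ^ k) i0 j : ℝ) := by
        refine mul_le_mul_of_nonneg_left ?_ hpi0.le
        rw [div_le_iff₀ hwmax]
        exact hA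
      refine hstep2.trans ?_
      refine Finset.single_le_sum (f := fun i => p i * ∑ j, ((G ^ k) i j : ℝ))
        (fun i _ => mul_nonneg (hp i) (Finset.sum_nonneg fun j _ => Nat.cast_nonneg _))
        (Finset.mem_univ i0)
    · -- UPPER BOUND
      obtain ⟨B, hBdef⟩ : ∃ x : ℝ, x = C ^ m * 2 ^ m * wmax / wmin * (k:ℝ) ^ m * μ ^ k :=
        ⟨_, rfl⟩
      have hBkey : ∀ i : Fin N, 0 < p i → (∑ j, ((G ^ k) i j : ℝ)) ≤ B := by
        intro i hpi
        have hRi : ∃ i', 0 < p i' ∧ ∃ k', 0 < (G ^ k') i' i := ⟨i, hpi, 0, by simp⟩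
        have h1 : (∑ j, ((G ^ k) i j : ℝ)) * wmin ≤ auxV G w k i := by
          unfold auxV
          rw [Finset.sum_mul]
          exact Finset.sum_le_sum fun l _ =>
            mul_le_mul_of_nonneg_left (hwminle l) (Nat.cast_nonneg _)
        have h2 := hup k i hRi
        have f1 : C ^ (m - (blk i : ℕ)) ≤ C ^ m := pow_le_pow_right₀ hC1 (Nat.sub_le m _)
        have f2 : ((k:ℝ) + 1) ^ (m - 1 - (blk i : ℕ)) ≤ ((k:ℝ) + 1) ^ (m - 1) :=
          pow_le_pow_right₀ (by linarith) (Nat.sub_le _ _)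
        have f4 : ((k:ℝ) + 1) ^ (m - 1) ≤ 2 ^ m * (k:ℝ) ^ m := by
          have e1 : (k:ℝ) + 1 ≤ 2 * k := by linarith
          calc ((k:ℝ) + 1) ^ (m - 1) ≤ (2 * (k:ℝ)) ^ (m - 1) :=
              pow_le_pow_left₀ (by linarith) e1 _
            _ ≤ (2 * (k:ℝ)) ^ m := pow_le_pow_right₀ (by linarith) (Nat.sub_le m 1)
            _ = 2 ^ m * (k:ℝ) ^ m := mul_pow 2 _ m
        have h3 : auxV G w k i ≤ C ^ m * (2 ^ m * (k:ℝ) ^ m) * μ ^ k * wmax := by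
          refine h2.trans ?_
          have g1 : C ^ (m - (blk i : ℕ)) * ((k:ℝ) + 1) ^ (m - 1 - (blk i : ℕ))
              ≤ C ^ m * (2 ^ m * (k:ℝ) ^ m) := by
            calc C ^ (m - (blk i : ℕ)) * ((k:ℝ) + 1) ^ (m - 1 - (blk i : ℕ))
                ≤ C ^ m * ((k:ℝ) + 1) ^ (m - 1) :=
                  mul_le_mul f1 f2 (by positivity) (pow_nonneg hC0.le m)
              _ ≤ C ^ m * (2 ^ m * (k:ℝ) ^ m) :=
                  mul_le_mul_of_nonneg_left f4 (pow_nonneg hC0.le m)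
          calc C ^ (m - (blk i : ℕ)) * ((k:ℝ) + 1) ^ (m - 1 - (blk i : ℕ)) * μ ^ k * w i
              = (C ^ (m - (blk i : ℕ)) * ((k:ℝ) + 1) ^ (m - 1 - (blk i : ℕ))) * (μ ^ k * w i) := by
                ring
            _ ≤ (C ^ m * (2 ^ m * (k:ℝ) ^ m)) * (μ ^ k * w i) :=
                mul_le_mul_of_nonneg_right g1
                  (mul_nonneg (pow_nonneg hμ0.le k) (hw i).le)
            _ ≤ (C ^ m * (2 ^ m * (k:ℝ) ^ m)) * (μ ^ k * wmax) := by
                refine mul_le_mul_of_nonneg_left ?_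
                  (mul_nonneg (pow_nonneg hC0.le m) (by positivity))
                exact mul_le_mul_of_nonneg_left (hwmaxle i) (pow_nonneg hμ0.le k)
            _ = C ^ m * (2 ^ m * (k:ℝ) ^ m) * μ ^ k * wmax := by ring
        have hBw : B * wmin = C ^ m * (2 ^ m * (k:ℝ) ^ m) * μ ^ k * wmax := by
          rw [hBdef]
          field_simp
        have : (∑ j, ((G ^ k) i j : ℝ)) * wmin ≤ B * wmin := by
          rw [hBw]
          exact h1.trans h3
        exact le_of_mul_le_mul_right this hwmin
      have hskB : sk G p k ≤ B := by
        rw [hsk]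
        have hsum : ∀ i : Fin N, p i * ∑ j, ((G ^ k) i j : ℝ) ≤ p i * B := by
          intro i
          rcases eq_or_lt_of_le (hp i) with h0 | hpos
          · rw [← h0]
            simp
          · exact mul_le_mul_of_nonneg_left (hBkey i hpos) hpos.le
        calc ∑ i, p i * ∑ j, ((G ^ k) i j : ℝ) ≤ ∑ i, p i * B := Finset.sum_le_sum fun i _ => hsum i
          _ = (∑ i, p i) * B := by rw [Finset.sum_mul]
          _ = B := by rw [hps, one_mul]
      refine hskB.trans (le_of_eq ?_)
      rw [hBdef]
end

section
/- For every probability vector p and every real number t > 1, the series ∑_{k=0}^∞ t^{-k} s_k(p) converges if and only if limsup_{k→∞} s_k(p)^{1/k} < t. (This is the paper's Corollary on tracial entropies of graphs: with t = e^β, a trace τ lies in Tr_β(A), i.e. c_{τ,β} < ∞, if and only if h_X^τ < β.) -/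
open Filter

section AuxStmt9

variable {N m : ℕ} (G : Matrix (Fin N) (Fin N) ℕ) (blk : Fin N → Fin m)
  (lam : Fin m → ℝ) (w : Fin N → ℝ)

lemma stmt9_tendsto_rpow_inv_nat {C : ℝ} (hC : 0 < C) :
    Filter.Tendsto (fun k : ℕ => C ^ ((k : ℝ)⁻¹)) Filter.atTop (nhds 1) := by
  have h2 : Filter.Tendsto (fun k : ℕ => Real.log C * (k : ℝ)⁻¹) Filter.atTop (nhds 0) := by
    simpa using (tendsto_inv_atTop_nhds_zero_nat (𝕜 := ℝ)).const_mul (Real.log C)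
  have := (Real.continuous_exp.tendsto 0).comp h2
  simp only [Real.exp_zero] at this
  refine this.congr fun k => ?_
  rw [Function.comp_apply, ← Real.rpow_def_of_pos hC]

/-- Diagonal-block lower bound: `(G^k w)_j ≥ lam(blk j)^k * w j`. -/
lemma stmt9_diag_lower (hw : ∀ i, 0 < w i)
    (heig : ∀ i : Fin N,
      ∑ j ∈ Finset.univ.filter (fun j => blk j = blk i), (G i j : ℝ) * w j
        = lam (blk i) * w i) :
    ∀ (k : ℕ) (j : Fin N), lam (blk j) ^ k * w j ≤ ∑ j', ((G ^ k) j j' : ℝ) * w j' := by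
  intro k
  induction k with
  | zero =>
    intro j
    simp [Matrix.one_apply, Finset.sum_ite_eq, Finset.mem_univ]
  | succ k ih =>
    intro j
    have e : ∀ j', ((G ^ (k+1)) j j' : ℝ) = ∑ x, (G j x : ℝ) * ((G ^ k) x j') := by
      intro j'
      rw [pow_succ', Matrix.mul_apply]; push_cast; ring
    have e2 : ∑ j', ((G ^ (k+1)) j j' : ℝ) * w j'
        = ∑ x, (G j x : ℝ) * ∑ j', ((G ^ k) x j' : ℝ) * w j' := by
      simp_rw [e, Finset.sum_mul, Finset.mul_sum]
      rw [Finset.sum_comm]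
      simp_rw [mul_assoc]
    rw [e2]
    have h1 : ∑ x ∈ Finset.univ.filter (fun x => blk x = blk j),
        (G j x : ℝ) * (lam (blk j) ^ k * w x)
        ≤ ∑ x ∈ Finset.univ.filter (fun x => blk x = blk j),
          (G j x : ℝ) * ∑ j', ((G ^ k) x j' : ℝ) * w j' := by
      refine Finset.sum_le_sum fun x hx => ?_
      have hbx : blk x = blk j := (Finset.mem_filter.mp hx).2
      have := ih x
      rw [hbx] at this
      exact mul_le_mul_of_nonneg_left this (Nat.cast_nonneg _)
    have h2 : ∑ x ∈ Finset.univ.filter (fun x => blk x = blk j),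
          (G j x : ℝ) * ∑ j', ((G ^ k) x j' : ℝ) * w j'
        ≤ ∑ x, (G j x : ℝ) * ∑ j', ((G ^ k) x j' : ℝ) * w j' := by
      refine Finset.sum_le_sum_of_subset_of_nonneg (Finset.filter_subset _ _) fun x _ _ => ?_
      exact mul_nonneg (Nat.cast_nonneg _) (Finset.sum_nonneg fun j' _ =>
        mul_nonneg (Nat.cast_nonneg _) (hw j').le)
    have h3 : ∑ x ∈ Finset.univ.filter (fun x => blk x = blk j),
        (G j x : ℝ) * (lam (blk j) ^ k * w x)
        = lam (blk j) ^ (k+1) * w j := by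
      have e3 : ∑ x ∈ Finset.univ.filter (fun x => blk x = blk j),
          (G j x : ℝ) * (lam (blk j) ^ k * w x)
          = lam (blk j) ^ k * ∑ x ∈ Finset.univ.filter (fun x => blk x = blk j),
            (G j x : ℝ) * w x := by
        rw [Finset.mul_sum]; exact Finset.sum_congr rfl fun x _ => by ring
      rw [e3, heig j, pow_succ]; ring
    linarith

/-- Path concatenation lower bound. -/
lemma stmt9_concat_lower (hw : ∀ i, 0 < w i) (a b : ℕ) (i j : Fin N) :
    ((G ^ a) i j : ℝ) * ∑ j', ((G ^ b) j j' : ℝ) * w j'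
      ≤ ∑ j', ((G ^ (a + b)) i j' : ℝ) * w j' := by
  rw [Finset.mul_sum]
  refine Finset.sum_le_sum fun j' _ => ?_
  have h : ((G ^ a) i j : ℝ) * ((G ^ b) j j') ≤ ((G ^ (a+b)) i j' : ℝ) := by
    have e : ((G ^ (a+b)) i j' : ℝ) = ∑ x, ((G ^ a) i x : ℝ) * ((G ^ b) x j') := by
      rw [pow_add, Matrix.mul_apply]; push_cast; ring
    rw [e]
    exact Finset.single_le_sum (f := fun x => ((G ^ a) i x : ℝ) * ((G ^ b) x j'))
      (fun x _ => mul_nonneg (Nat.cast_nonneg _) (Nat.cast_nonneg _)) (Finset.mem_univ j)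
  calc ((G ^ a) i j : ℝ) * (((G ^ b) j j' : ℝ) * w j')
      = (((G ^ a) i j : ℝ) * ((G ^ b) j j')) * w j' := by ring
    _ ≤ _ := mul_le_mul_of_nonneg_right h (hw j').le

/-- Construction of a positive vector `v` with `(G^k v)_i ≤ (μ+ε)^k v_i` on a
`G`-forward-closed set `S` on which all block eigenvalues are `≤ μ`. -/
lemma stmt9_upper_main (hN : 1 ≤ N)
    (hupper : ∀ i j : Fin N, blk j < blk i → G i j = 0)
    (hw : ∀ i, 0 < w i)
    (heig : ∀ i : Fin N,
      ∑ j ∈ Finset.univ.filter (fun j => blk j = blk i), (G i j : ℝ) * w j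
        = lam (blk i) * w i)
    (S : Fin N → Prop) (hSclose : ∀ i x, S i → G i x ≠ 0 → S x)
    (μ : ℝ) (hμ0 : 0 ≤ μ) (hSμ : ∀ i, S i → lam (blk i) ≤ μ)
    (ε : ℝ) (hε : 0 < ε) :
    ∃ v : Fin N → ℝ, (∀ i, 0 < v i) ∧
      ∀ (k : ℕ) (i : Fin N), S i → ∑ j, ((G ^ k) i j : ℝ) * v j ≤ (μ + ε) ^ k * v i := by
  have hNe : (Finset.univ : Finset (Fin N)).Nonempty := ⟨⟨0, hN⟩, Finset.mem_univ _⟩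
  set wmin : ℝ := Finset.univ.inf' hNe w with hwmin_def
  have hwmin_pos : 0 < wmin := (Finset.lt_inf'_iff hNe).mpr fun i _ => hw i
  have hwmin_le : ∀ i, wmin ≤ w i := fun i => Finset.inf'_le _ (Finset.mem_univ i)
  set K : ℝ := Finset.univ.sup' hNe (fun i => ∑ j, (G i j : ℝ) * w j) with hK_def
  have hK_ge : ∀ i, ∑ j, (G i j : ℝ) * w j ≤ K := fun i =>
    Finset.le_sup' (fun i => ∑ j, (G i j : ℝ) * w j) (Finset.mem_univ i)
  have hK0 : 0 ≤ K := by
    refine le_trans ?_ (hK_ge ⟨0, hN⟩)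
    exact Finset.sum_nonneg fun j _ => mul_nonneg (Nat.cast_nonneg _) (hw j).le
  set ρ : ℝ := min 1 (ε * wmin / (K + 1)) with hρ_def
  have hρ0 : 0 < ρ := lt_min one_pos (by positivity)
  have hρ1 : ρ ≤ 1 := min_le_left _ _
  have hρK : ρ * K ≤ ε * wmin := by
    have h1 : ρ ≤ ε * wmin / (K + 1) := min_le_right _ _
    have h2 : ρ * K ≤ ρ * (K + 1) := by nlinarith
    have h3 : ρ * (K + 1) ≤ (ε * wmin / (K + 1)) * (K + 1) := by nlinarith
    have h4 : (ε * wmin / (K + 1)) * (K + 1) = ε * wmin := by field_simp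
    linarith
  refine ⟨fun i => ρ ^ ((blk i : ℕ)) * w i, fun i => mul_pos (pow_pos hρ0 _) (hw i), ?_⟩
  set v : Fin N → ℝ := fun i => ρ ^ ((blk i : ℕ)) * w i with hv_def
  have hv0 : ∀ i, 0 < v i := fun i => mul_pos (pow_pos hρ0 _) (hw i)
  have claim1 : ∀ i, S i → ∑ j, (G i j : ℝ) * v j ≤ (μ + ε) * v i := by
    intro i hi
    have hsplit := Finset.sum_filter_add_sum_filter_not Finset.univ
      (fun j => blk j = blk i) (fun j => (G i j : ℝ) * v j)
    have part1 : ∑ j ∈ Finset.univ.filter (fun j => blk j = blk i), (G i j : ℝ) * v j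
        = ρ ^ ((blk i : ℕ)) * (lam (blk i) * w i) := by
      rw [← heig i, Finset.mul_sum]
      refine Finset.sum_congr rfl fun j hj => ?_
      have hbj : blk j = blk i := (Finset.mem_filter.mp hj).2
      simp only [hv_def, hbj]; ring
    have part1le : ∑ j ∈ Finset.univ.filter (fun j => blk j = blk i), (G i j : ℝ) * v j
        ≤ μ * v i := by
      rw [part1]
      have hle := hSμ i hi
      have h1 : ρ ^ ((blk i : ℕ)) * (lam (blk i) * w i) ≤ ρ ^ ((blk i : ℕ)) * (μ * w i) := by
        have : lam (blk i) * w i ≤ μ * w i := mul_le_mul_of_nonneg_right hle (hw i).le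
        exact mul_le_mul_of_nonneg_left this (pow_nonneg hρ0.le _)
      calc ρ ^ ((blk i : ℕ)) * (lam (blk i) * w i) ≤ ρ ^ ((blk i : ℕ)) * (μ * w i) := h1
        _ = μ * v i := by simp only [hv_def]; ring
    have part2 : ∑ j ∈ Finset.univ.filter (fun j => ¬ blk j = blk i), (G i j : ℝ) * v j
        ≤ ε * v i := by
      have termle : ∀ j ∈ Finset.univ.filter (fun j => ¬ blk j = blk i),
          (G i j : ℝ) * v j ≤ ρ ^ ((blk i : ℕ) + 1) * ((G i j : ℝ) * w j) := by
        intro j hj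
        have hbj : blk j ≠ blk i := (Finset.mem_filter.mp hj).2
        rcases lt_or_gt_of_ne hbj with hlt | hgt
        · rw [hupper i j hlt]
          simp
        · have hle : (blk i : ℕ) + 1 ≤ (blk j : ℕ) := hgt
          have hpow : ρ ^ ((blk j : ℕ)) ≤ ρ ^ ((blk i : ℕ) + 1) :=
            pow_le_pow_of_le_one hρ0.le hρ1 hle
          calc (G i j : ℝ) * v j = ρ ^ ((blk j : ℕ)) * ((G i j : ℝ) * w j) := by
                simp only [hv_def]; ring
            _ ≤ ρ ^ ((blk i : ℕ) + 1) * ((G i j : ℝ) * w j) :=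
              mul_le_mul_of_nonneg_right hpow
                (mul_nonneg (Nat.cast_nonneg _) (hw j).le)
      calc ∑ j ∈ Finset.univ.filter (fun j => ¬ blk j = blk i), (G i j : ℝ) * v j
          ≤ ∑ j ∈ Finset.univ.filter (fun j => ¬ blk j = blk i),
              ρ ^ ((blk i : ℕ) + 1) * ((G i j : ℝ) * w j) := Finset.sum_le_sum termle
        _ = ρ ^ ((blk i : ℕ) + 1) * ∑ j ∈ Finset.univ.filter (fun j => ¬ blk j = blk i),
              (G i j : ℝ) * w j := by rw [Finset.mul_sum]
        _ ≤ ρ ^ ((blk i : ℕ) + 1) * ∑ j, (G i j : ℝ) * w j := by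
            refine mul_le_mul_of_nonneg_left ?_ (pow_nonneg hρ0.le _)
            exact Finset.sum_le_sum_of_subset_of_nonneg (Finset.filter_subset _ _)
              fun j _ _ => mul_nonneg (Nat.cast_nonneg _) (hw j).le
        _ ≤ ρ ^ ((blk i : ℕ) + 1) * K := mul_le_mul_of_nonneg_left (hK_ge i) (pow_nonneg hρ0.le _)
        _ = ρ ^ ((blk i : ℕ)) * (ρ * K) := by ring
        _ ≤ ρ ^ ((blk i : ℕ)) * (ε * wmin) := mul_le_mul_of_nonneg_left hρK (pow_nonneg hρ0.le _)
        _ ≤ ρ ^ ((blk i : ℕ)) * (ε * w i) :=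
            mul_le_mul_of_nonneg_left (mul_le_mul_of_nonneg_left (hwmin_le i) hε.le)
              (pow_nonneg hρ0.le _)
        _ = ε * v i := by simp only [hv_def]; ring
    calc ∑ j, (G i j : ℝ) * v j
        = (∑ j ∈ Finset.univ.filter (fun j => blk j = blk i), (G i j : ℝ) * v j)
          + ∑ j ∈ Finset.univ.filter (fun j => ¬ blk j = blk i), (G i j : ℝ) * v j :=
          hsplit.symm
      _ ≤ μ * v i + ε * v i := add_le_add part1le part2
      _ = (μ + ε) * v i := by ring
  intro k
  induction k with
  | zero =>
    intro i _
    simp [Matrix.one_apply, Finset.sum_ite_eq, Finset.mem_univ]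
  | succ k ih =>
    intro i hi
    have hμε : (0:ℝ) ≤ μ + ε := by linarith
    have e2 : ∑ j, ((G ^ (k+1)) i j : ℝ) * v j
        = ∑ x, (G i x : ℝ) * ∑ j, ((G ^ k) x j : ℝ) * v j := by
      have e : ∀ j, ((G ^ (k+1)) i j : ℝ) = ∑ x, (G i x : ℝ) * ((G ^ k) x j) := by
        intro j; rw [pow_succ', Matrix.mul_apply]; push_cast; ring
      simp_rw [e, Finset.sum_mul, Finset.mul_sum]
      rw [Finset.sum_comm]
      simp_rw [mul_assoc]
    rw [e2]
    calc ∑ x, (G i x : ℝ) * ∑ j, ((G ^ k) x j : ℝ) * v j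
        ≤ ∑ x, (G i x : ℝ) * ((μ + ε) ^ k * v x) := by
          refine Finset.sum_le_sum fun x _ => ?_
          by_cases hx : G i x = 0
          · simp [hx]
          · exact mul_le_mul_of_nonneg_left (ih x (hSclose i x hi hx)) (Nat.cast_nonneg _)
      _ = (μ + ε) ^ k * ∑ x, (G i x : ℝ) * v x := by
          rw [Finset.mul_sum]; exact Finset.sum_congr rfl fun x _ => by ring
      _ ≤ (μ + ε) ^ k * ((μ + ε) * v i) :=
          mul_le_mul_of_nonneg_left (claim1 i hi) (pow_nonneg hμε _)
      _ = (μ + ε) ^ (k+1) * v i := by rw [pow_succ]; ring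

end AuxStmt9


/-- for every probability vector `p` and every real `t > 1`, the series
`∑_k t^{-k} s_k(p)` converges iff `limsup_k s_k(p)^{1/k} < t`. -/
theorem stmt_9
    -- Context: `G` is an `N × N` matrix with nonnegative integer entries, block upper
    -- triangular with respect to the partition of `Fin N` into `m` nonempty consecutive
    -- blocks given by the fibers of the monotone surjection `blk`; each diagonal block
    -- `G_s` has eigenvalue `λ_s ≥ 0` with strictly positive eigenvector `w|_{B_s}`.
    (N m : ℕ) (hN : 1 ≤ N) (hm : 1 ≤ m)
    (G : Matrix (Fin N) (Fin N) ℕ)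
    (blk : Fin N → Fin m) (hmono : Monotone blk) (hsurj : Function.Surjective blk)
    (hupper : ∀ i j : Fin N, blk j < blk i → G i j = 0)
    (lam : Fin m → ℝ) (hlam : ∀ s, 0 ≤ lam s)
    (w : Fin N → ℝ) (hw : ∀ i, 0 < w i)
    (heig : ∀ i : Fin N,
      ∑ j ∈ Finset.univ.filter (fun j => blk j = blk i), (G i j : ℝ) * w j
        = lam (blk i) * w i)
    :
    ∀ p : Fin N → ℝ, (∀ i, 0 ≤ p i) → (∑ i, p i = 1) →
      ∀ t : ℝ, 1 < t →
        (Summable (fun k : ℕ => t⁻¹ ^ k * sk G p k) ↔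
          Filter.limsup (fun k : ℕ => sk G p k ^ ((k : ℝ)⁻¹)) Filter.atTop < t) := by
  classical
  intro p hp hps t ht
  have ht0 : (0:ℝ) < t := lt_trans one_pos ht
  have hNe : (Finset.univ : Finset (Fin N)).Nonempty := ⟨⟨0, hN⟩, Finset.mem_univ _⟩
  have hsk0 : ∀ k, 0 ≤ sk G p k := by
    intro k
    refine Finset.sum_nonneg fun i _ => Finset.sum_nonneg fun j _ => ?_
    exact mul_nonneg (hp i) (Nat.cast_nonneg _)
  have hpex : ∃ i, 0 < p i := by
    by_contra h
    push_neg at h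
    have h2 : ∑ i, p i ≤ 0 := Finset.sum_nonpos fun i _ => h i
    rw [hps] at h2; linarith
  obtain ⟨i₀, hpi₀⟩ := hpex
  -- reachable set
  set S : Fin N → Prop := fun i => ∃ i0, 0 < p i0 ∧ ∃ l, 0 < (G ^ l) i0 i with hS_def
  have hSclose : ∀ i x, S i → G i x ≠ 0 → S x := by
    rintro i x ⟨i0, hpi, l, hl⟩ hgx
    refine ⟨i0, hpi, l + 1, ?_⟩
    have e : (G ^ (l+1)) i0 x = ∑ y, (G ^ l) i0 y * G y x := by
      rw [pow_succ, Matrix.mul_apply]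
    rw [e]
    have hterm : 0 < (G ^ l) i0 i * G i x := Nat.mul_pos hl (Nat.pos_of_ne_zero hgx)
    exact lt_of_lt_of_le hterm (Finset.single_le_sum
      (f := fun y => (G ^ l) i0 y * G y x) (fun y _ => Nat.zero_le _) (Finset.mem_univ i))
  have hSsupp : ∀ i, 0 < p i → S i := by
    intro i hpi
    exact ⟨i, hpi, 0, by simp [Matrix.one_apply]⟩
  -- the maximal communicated eigenvalue
  set Rfin : Finset (Fin m) :=
    Finset.univ.filter (fun s => ∃ i, 0 < p i ∧ CommByIdx G blk s i) with hR_def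
  have hRne : Rfin.Nonempty := by
    refine ⟨blk i₀, Finset.mem_filter.mpr ⟨Finset.mem_univ _, i₀, hpi₀, 0, i₀, rfl, ?_⟩⟩
    simp [Matrix.one_apply]
  set μ : ℝ := Rfin.sup' hRne lam with hμ_def
  have hSμ : ∀ i, S i → lam (blk i) ≤ μ := by
    rintro i ⟨i0, hpi, l, hl⟩
    exact Finset.le_sup' lam (Finset.mem_filter.mpr ⟨Finset.mem_univ _, i0, hpi, l, i, rfl, hl⟩)
  have hμ0 : 0 ≤ μ := le_trans (hlam (blk i₀)) (hSμ i₀ (hSsupp i₀ hpi₀))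
  -- upper bound
  have hub : ∀ ε : ℝ, 0 < ε → ∃ C : ℝ, 0 < C ∧ ∀ k, sk G p k ≤ C * (μ + ε) ^ k := by
    intro ε hε
    obtain ⟨v, hv0, hvk⟩ := stmt9_upper_main G blk lam w hN hupper hw heig S hSclose μ hμ0 hSμ ε hε
    set vmin : ℝ := Finset.univ.inf' hNe v with hvmin_def
    have hvmin_pos : 0 < vmin := (Finset.lt_inf'_iff hNe).mpr fun i _ => hv0 i
    have hvmin_le : ∀ i, vmin ≤ v i := fun i => Finset.inf'_le _ (Finset.mem_univ i)
    refine ⟨vmin⁻¹ * ∑ i, p i * v i, ?_, ?_⟩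
    · have hpos : 0 < ∑ i, p i * v i :=
        Finset.sum_pos' (fun i _ => mul_nonneg (hp i) (hv0 i).le)
          ⟨i₀, Finset.mem_univ _, mul_pos hpi₀ (hv0 i₀)⟩
      exact mul_pos (inv_pos.mpr hvmin_pos) hpos
    · intro k
      have step : ∀ i, p i * ∑ j, ((G ^ k) i j : ℝ) ≤ p i * (vmin⁻¹ * ((μ + ε) ^ k * v i)) := by
        intro i
        rcases eq_or_lt_of_le (hp i) with h0 | hpi
        · rw [← h0]; simp
        · refine mul_le_mul_of_nonneg_left ?_ (hp i)
          have h1 : ∑ j, ((G ^ k) i j : ℝ) ≤ vmin⁻¹ * ∑ j, ((G ^ k) i j : ℝ) * v j := by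
            rw [Finset.mul_sum]
            refine Finset.sum_le_sum fun j _ => ?_
            have h2 : 1 ≤ vmin⁻¹ * v j := by
              rw [← inv_mul_cancel₀ (ne_of_gt hvmin_pos)]
              exact mul_le_mul_of_nonneg_left (hvmin_le j) (inv_nonneg.mpr hvmin_pos.le)
            calc ((G ^ k) i j : ℝ) = ((G ^ k) i j : ℝ) * 1 := by ring
              _ ≤ ((G ^ k) i j : ℝ) * (vmin⁻¹ * v j) :=
                mul_le_mul_of_nonneg_left h2 (Nat.cast_nonneg _)
              _ = vmin⁻¹ * (((G ^ k) i j : ℝ) * v j) := by ring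
          have h2 : vmin⁻¹ * ∑ j, ((G ^ k) i j : ℝ) * v j
              ≤ vmin⁻¹ * ((μ + ε) ^ k * v i) :=
            mul_le_mul_of_nonneg_left (hvk k i (hSsupp i hpi)) (inv_nonneg.mpr hvmin_pos.le)
          exact h1.trans h2
      calc sk G p k = ∑ i, p i * ∑ j, ((G ^ k) i j : ℝ) := by
            unfold sk
            exact Finset.sum_congr rfl fun i _ => (Finset.mul_sum _ _ _).symm
        _ ≤ ∑ i, p i * (vmin⁻¹ * ((μ + ε) ^ k * v i)) := Finset.sum_le_sum fun i _ => step i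
        _ = (vmin⁻¹ * ∑ i, p i * v i) * (μ + ε) ^ k := by
            rw [Finset.mul_sum, Finset.sum_mul]
            exact Finset.sum_congr rfl fun i _ => by ring
  -- lower bound
  have hlb : ∃ k0 : ℕ, ∃ c : ℝ, 0 < c ∧ ∀ k, k0 ≤ k → c * μ ^ (k - k0) ≤ sk G p k := by
    obtain ⟨s₁, hs₁mem, hs₁eq⟩ := Finset.exists_mem_eq_sup' hRne lam
    obtain ⟨i0, hpi, k0, j0, hbj0, hG0⟩ := (Finset.mem_filter.mp hs₁mem).2
    set wmax : ℝ := Finset.univ.sup' hNe w with hwmax_def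
    have hwmax_ge : ∀ i, w i ≤ wmax := fun i => Finset.le_sup' w (Finset.mem_univ i)
    have hwmax_pos : 0 < wmax := lt_of_lt_of_le (hw i₀) (hwmax_ge i₀)
    refine ⟨k0, p i0 * w j0 / wmax, div_pos (mul_pos hpi (hw j0)) hwmax_pos, ?_⟩
    intro k hk
    have hl : k = k0 + (k - k0) := (Nat.add_sub_cancel' hk).symm
    have c1 : μ ^ (k - k0) * w j0 ≤ ∑ j', ((G ^ (k - k0)) j0 j' : ℝ) * w j' := by
      have hd := stmt9_diag_lower G blk lam w hw heig (k - k0) j0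
      rw [hbj0, ← hs₁eq] at hd
      exact hd
    have c2 : ((G ^ k0) i0 j0 : ℝ) * (μ ^ (k - k0) * w j0) ≤ ∑ j', ((G ^ k) i0 j' : ℝ) * w j' := by
      calc ((G ^ k0) i0 j0 : ℝ) * (μ ^ (k - k0) * w j0)
          ≤ ((G ^ k0) i0 j0 : ℝ) * ∑ j', ((G ^ (k - k0)) j0 j' : ℝ) * w j' :=
            mul_le_mul_of_nonneg_left c1 (Nat.cast_nonneg _)
        _ ≤ ∑ j', ((G ^ (k0 + (k - k0))) i0 j' : ℝ) * w j' :=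
            stmt9_concat_lower G w hw k0 (k - k0) i0 j0
        _ = ∑ j', ((G ^ k) i0 j' : ℝ) * w j' := by rw [← hl]
    have hG0' : (1:ℝ) ≤ ((G ^ k0) i0 j0 : ℝ) := Nat.one_le_cast.mpr hG0
    have c3 : μ ^ (k - k0) * w j0 ≤ ∑ j', ((G ^ k) i0 j' : ℝ) * w j' :=
      le_trans (le_mul_of_one_le_left (mul_nonneg (pow_nonneg hμ0 _) (hw j0).le) hG0') c2
    have c4 : ∑ j', ((G ^ k) i0 j' : ℝ) * w j' ≤ wmax * ∑ j', ((G ^ k) i0 j' : ℝ) := by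
      rw [Finset.mul_sum]
      refine Finset.sum_le_sum fun j' _ => ?_
      calc ((G ^ k) i0 j' : ℝ) * w j' ≤ ((G ^ k) i0 j' : ℝ) * wmax :=
          mul_le_mul_of_nonneg_left (hwmax_ge j') (Nat.cast_nonneg _)
        _ = wmax * ((G ^ k) i0 j' : ℝ) := by ring
    have c5 : p i0 * ∑ j', ((G ^ k) i0 j' : ℝ) ≤ sk G p k := by
      have e : sk G p k = ∑ i, p i * ∑ j, ((G ^ k) i j : ℝ) := by
        unfold sk
        exact Finset.sum_congr rfl fun i _ => (Finset.mul_sum _ _ _).symm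
      rw [e]
      refine Finset.single_le_sum (f := fun i => p i * ∑ j, ((G ^ k) i j : ℝ))
        (fun i _ => mul_nonneg (hp i) (Finset.sum_nonneg fun j _ => Nat.cast_nonneg _))
        (Finset.mem_univ i0)
    have hmp := mul_le_mul_of_nonneg_left (c3.trans c4)
      (show (0:ℝ) ≤ p i0 / wmax by positivity)
    calc p i0 * w j0 / wmax * μ ^ (k - k0)
        = (p i0 / wmax) * (μ ^ (k - k0) * w j0) := by ring
      _ ≤ (p i0 / wmax) * (wmax * ∑ j', ((G ^ k) i0 j' : ℝ)) := hmp
      _ = p i0 * ∑ j', ((G ^ k) i0 j' : ℝ) := by field_simp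
      _ ≤ sk G p k := c5
  -- final analysis
  rcases lt_or_ge μ t with hμt | htμ
  · -- both sides hold
    have hε : (0:ℝ) < (t - μ) / 2 := by linarith
    obtain ⟨C, hC0, hCk⟩ := hub _ hε
    have hμε_lt : μ + (t - μ) / 2 < t := by linarith
    have hμε0 : (0:ℝ) ≤ μ + (t - μ) / 2 := by linarith
    refine iff_of_true ?_ ?_
    · -- summable
      have hr0 : 0 ≤ (μ + (t - μ) / 2) * t⁻¹ := mul_nonneg hμε0 (inv_nonneg.mpr ht0.le)
      have hr1 : (μ + (t - μ) / 2) * t⁻¹ < 1 := by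
        rw [← div_eq_mul_inv, div_lt_one ht0]; exact hμε_lt
      refine Summable.of_nonneg_of_le
        (fun k => mul_nonneg (pow_nonneg (inv_nonneg.mpr ht0.le) k) (hsk0 k))
        (fun k => ?_) ((summable_geometric_of_lt_one hr0 hr1).mul_left C)
      calc t⁻¹ ^ k * sk G p k ≤ t⁻¹ ^ k * (C * (μ + (t - μ) / 2) ^ k) :=
          mul_le_mul_of_nonneg_left (hCk k) (pow_nonneg (inv_nonneg.mpr ht0.le) k)
        _ = C * ((μ + (t - μ) / 2) * t⁻¹) ^ k := by rw [mul_pow]; ring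
    · -- limsup < t
      have h1 : Tendsto (fun k : ℕ => C ^ ((k:ℝ)⁻¹) * (μ + (t - μ) / 2)) atTop
          (nhds (1 * (μ + (t - μ) / 2))) :=
        (stmt9_tendsto_rpow_inv_nat hC0).mul_const _
      have hev : ∀ᶠ k in atTop,
          sk G p k ^ ((k:ℝ)⁻¹) ≤ C ^ ((k:ℝ)⁻¹) * (μ + (t - μ) / 2) := by
        filter_upwards [eventually_ge_atTop 1] with k hk
        have hkne : ((k:ℝ)) ≠ 0 := Nat.cast_ne_zero.mpr (by omega)
        have h3 : sk G p k ^ ((k:ℝ)⁻¹) ≤ (C * (μ + (t - μ) / 2) ^ k) ^ ((k:ℝ)⁻¹) :=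
          Real.rpow_le_rpow (hsk0 k) (hCk k) (by positivity)
        have h4 : (C * (μ + (t - μ) / 2) ^ k) ^ ((k:ℝ)⁻¹)
            = C ^ ((k:ℝ)⁻¹) * (μ + (t - μ) / 2) := by
          rw [Real.mul_rpow hC0.le (pow_nonneg hμε0 k), ← Real.rpow_natCast (μ + (t - μ) / 2) k,
            ← Real.rpow_mul hμε0, mul_inv_cancel₀ hkne, Real.rpow_one]
        rw [← h4]; exact h3
      have hcb : IsCoboundedUnder (· ≤ ·) atTop (fun k : ℕ => sk G p k ^ ((k:ℝ)⁻¹)) :=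
        IsCoboundedUnder.of_frequently_ge (a := 0)
          (Frequently.of_forall fun k => Real.rpow_nonneg (hsk0 k) _)
      have hbd : IsBoundedUnder (· ≤ ·) atTop
          (fun k : ℕ => C ^ ((k:ℝ)⁻¹) * (μ + (t - μ) / 2)) := h1.isBoundedUnder_le
      have hle := limsup_le_limsup hev hcb hbd
      rw [h1.limsup_eq] at hle
      calc limsup (fun k : ℕ => sk G p k ^ ((k:ℝ)⁻¹)) atTop ≤ 1 * (μ + (t - μ) / 2) := hle
        _ < t := by linarith
  · -- both sides fail
    obtain ⟨k0, c, hc0, hlk⟩ := hlb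
    have hμpos : 0 < μ := lt_of_lt_of_le ht0 htμ
    refine iff_of_false ?_ ?_
    · -- not summable
      intro hS
      have hz := hS.tendsto_atTop_zero
      have hev : ∀ᶠ k in atTop, c * t⁻¹ ^ k0 ≤ t⁻¹ ^ k * sk G p k := by
        filter_upwards [eventually_ge_atTop k0] with k hk
        have h1 : c * μ ^ (k - k0) ≤ sk G p k := hlk k hk
        have key : c * t⁻¹ ^ k0 ≤ t⁻¹ ^ k * (c * μ ^ (k - k0)) := by
          have hk' : k = k0 + (k - k0) := (Nat.add_sub_cancel' hk).symm
          have h2 : t ^ (k - k0) ≤ μ ^ (k - k0) := pow_le_pow_left₀ ht0.le htμ _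
          have h3 : (1:ℝ) ≤ μ ^ (k - k0) * t⁻¹ ^ (k - k0) := by
            have he : t ^ (k - k0) * t⁻¹ ^ (k - k0) = 1 := by
              rw [← mul_pow, mul_inv_cancel₀ (ne_of_gt ht0), one_pow]
            calc (1:ℝ) = t ^ (k - k0) * t⁻¹ ^ (k - k0) := he.symm
              _ ≤ μ ^ (k - k0) * t⁻¹ ^ (k - k0) :=
                mul_le_mul_of_nonneg_right h2 (pow_nonneg (inv_nonneg.mpr ht0.le) _)
          calc c * t⁻¹ ^ k0 = (c * t⁻¹ ^ k0) * 1 := by ring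
            _ ≤ (c * t⁻¹ ^ k0) * (μ ^ (k - k0) * t⁻¹ ^ (k - k0)) :=
              mul_le_mul_of_nonneg_left h3
                (mul_nonneg hc0.le (pow_nonneg (inv_nonneg.mpr ht0.le) _))
            _ = t⁻¹ ^ (k0 + (k - k0)) * (c * μ ^ (k - k0)) := by rw [pow_add]; ring
            _ = t⁻¹ ^ k * (c * μ ^ (k - k0)) := by rw [← hk']
        exact key.trans (mul_le_mul_of_nonneg_left h1 (pow_nonneg (inv_nonneg.mpr ht0.le) k))
      have hle : c * t⁻¹ ^ k0 ≤ 0 := ge_of_tendsto hz hev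
      have hgt : 0 < c * t⁻¹ ^ k0 := mul_pos hc0 (pow_pos (inv_pos.mpr ht0) k0)
      linarith
    · -- limsup not < t
      intro hlim
      set c' : ℝ := c * (μ ^ k0)⁻¹ with hc'_def
      have hc'0 : 0 < c' := mul_pos hc0 (inv_pos.mpr (pow_pos hμpos k0))
      have hlow : ∀ᶠ (k : ℕ) in atTop, c' ^ ((k:ℝ)⁻¹) * μ ≤ sk G p k ^ ((k:ℝ)⁻¹) := by
        filter_upwards [eventually_ge_atTop (max k0 1)] with k hk
        have hk0 : k0 ≤ k := le_trans (le_max_left _ _) hk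
        have hk1 : 1 ≤ k := le_trans (le_max_right _ _) hk
        have hkne : ((k:ℝ)) ≠ 0 := Nat.cast_ne_zero.mpr (by omega)
        have h1 : c' * μ ^ k ≤ sk G p k := by
          have hlk' := hlk k hk0
          have e : μ ^ (k - k0) = μ ^ k * (μ ^ k0)⁻¹ := pow_sub₀ μ (ne_of_gt hμpos) hk0
          calc c' * μ ^ k = c * μ ^ (k - k0) := by rw [e, hc'_def]; ring
            _ ≤ sk G p k := hlk'
        have h2 : (c' * μ ^ k) ^ ((k:ℝ)⁻¹) ≤ sk G p k ^ ((k:ℝ)⁻¹) :=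
          Real.rpow_le_rpow (mul_nonneg hc'0.le (pow_nonneg hμpos.le k)) h1 (by positivity)
        have h3 : (c' * μ ^ k) ^ ((k:ℝ)⁻¹) = c' ^ ((k:ℝ)⁻¹) * μ := by
          rw [Real.mul_rpow hc'0.le (pow_nonneg hμpos.le k), ← Real.rpow_natCast μ k,
            ← Real.rpow_mul hμpos.le, mul_inv_cancel₀ hkne, Real.rpow_one]
        rw [← h3]; exact h2
      have h1 : Tendsto (fun k : ℕ => c' ^ ((k:ℝ)⁻¹) * μ) atTop (nhds (1 * μ)) :=
        (stmt9_tendsto_rpow_inv_nat hc'0).mul_const μ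
      have hcb' : IsCoboundedUnder (· ≤ ·) atTop (fun k : ℕ => c' ^ ((k:ℝ)⁻¹) * μ) :=
        IsCoboundedUnder.of_frequently_ge (a := 0)
          (Frequently.of_forall fun k => mul_nonneg (Real.rpow_nonneg hc'0.le _) hμpos.le)
      obtain ⟨C, hC0, hCk⟩ := hub 1 one_pos
      have hbdd : IsBoundedUnder (· ≤ ·) atTop (fun k : ℕ => sk G p k ^ ((k:ℝ)⁻¹)) := by
        have h2 : Tendsto (fun k : ℕ => C ^ ((k:ℝ)⁻¹) * (μ + 1)) atTop
            (nhds (1 * (μ + 1))) := (stmt9_tendsto_rpow_inv_nat hC0).mul_const _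
        obtain ⟨b, hb⟩ := h2.isBoundedUnder_le
        rw [eventually_map] at hb
        have hev2 : ∀ᶠ k in atTop, sk G p k ^ ((k:ℝ)⁻¹) ≤ b := by
          filter_upwards [eventually_ge_atTop 1, hb] with k hk hkb
          have hkne : ((k:ℝ)) ≠ 0 := Nat.cast_ne_zero.mpr (by omega)
          have h3 : sk G p k ^ ((k:ℝ)⁻¹) ≤ (C * (μ + 1) ^ k) ^ ((k:ℝ)⁻¹) :=
            Real.rpow_le_rpow (hsk0 k) (hCk k) (by positivity)
          have h4 : (C * (μ + 1) ^ k) ^ ((k:ℝ)⁻¹) = C ^ ((k:ℝ)⁻¹) * (μ + 1) := by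
            rw [Real.mul_rpow hC0.le (pow_nonneg (by linarith) k),
              ← Real.rpow_natCast (μ + 1) k, ← Real.rpow_mul (by linarith),
              mul_inv_cancel₀ hkne, Real.rpow_one]
          rw [← h4] at hkb
          exact h3.trans hkb
        exact isBoundedUnder_of_eventually_le hev2
      have hle := limsup_le_limsup hlow hcb' hbdd
      rw [h1.limsup_eq] at hle
      have : (1:ℝ) * μ < t := lt_of_le_of_lt hle hlim
      linarith
end

section
/- For every real number μ ≥ 0 and every probability vector p, limsup_{k→∞} s_k(p)^{1/k} ≤ μ if and only if p_i = 0 for every index i such that some block B_s with λ_s > μ is communicated by i. (This is the key claim of the paper's Remark on traces: h_X^τ ≤ log λ_n if and only if τ vanishes on all vertex sets V_j with j > n, where V_j consists of the vertices communicating with components of Perron–Frobenius eigenvalue λ_j > λ_n.) -/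
open Filter Finset


lemma upper_ind {N : ℕ} (G : Matrix (Fin N) (Fin N) ℕ) (Q : Fin N → Prop)
    (hQ : ∀ i j, Q i → 0 < G i j → Q j) (v : Fin N → ℝ) (hv : ∀ i, 0 ≤ v i)
    (ρ : ℝ) (hρ : 0 ≤ ρ) (h : ∀ i, Q i → ∑ j, (G i j : ℝ) * v j ≤ ρ * v i) :
    ∀ k, ∀ i, Q i → ∑ j, ((G ^ k) i j : ℝ) * v j ≤ ρ ^ k * v i := by
  intro k
  induction k with
  | zero =>
    intro i _
    simp [Matrix.one_apply]
  | succ k ih =>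
    intro i hi
    have key : ∀ j, (((G ^ (k + 1)) i j : ℕ) : ℝ) = ∑ a, (G i a : ℝ) * ((G ^ k) a j : ℝ) := by
      intro j
      rw [pow_succ', Matrix.mul_apply]
      push_cast
      rfl
    calc ∑ j, ((G ^ (k + 1)) i j : ℝ) * v j
        = ∑ a, (G i a : ℝ) * ∑ j, ((G ^ k) a j : ℝ) * v j := by
          simp_rw [key, Finset.sum_mul]
          rw [Finset.sum_comm]
          simp_rw [Finset.mul_sum, mul_assoc]
      _ ≤ ∑ a, (G i a : ℝ) * (ρ ^ k * v a) := by
          apply Finset.sum_le_sum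
          intro a _
          rcases Nat.eq_zero_or_pos (G i a) with h0 | h0
          · simp [h0]
          · exact mul_le_mul_of_nonneg_left (ih a (hQ i a hi h0)) (Nat.cast_nonneg _)
      _ = ρ ^ k * ∑ a, (G i a : ℝ) * v a := by
          rw [Finset.mul_sum]
          exact Finset.sum_congr rfl fun a _ => by ring
      _ ≤ ρ ^ k * (ρ * v i) := mul_le_mul_of_nonneg_left (h i hi) (pow_nonneg hρ k)
      _ = ρ ^ (k + 1) * v i := by ring

lemma lower_ind {N m : ℕ} (G : Matrix (Fin N) (Fin N) ℕ) (blk : Fin N → Fin m)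
    (lam : Fin m → ℝ) (hlam : ∀ s, 0 ≤ lam s)
    (w : Fin N → ℝ) (hw : ∀ i, 0 < w i)
    (heig : ∀ i : Fin N,
      ∑ j ∈ Finset.univ.filter (fun j => blk j = blk i), (G i j : ℝ) * w j
        = lam (blk i) * w i) :
    ∀ k, ∀ j, lam (blk j) ^ k * w j
      ≤ ∑ j' ∈ Finset.univ.filter (fun j' => blk j' = blk j), ((G ^ k) j j' : ℝ) * w j' := by
  intro k
  induction k with
  | zero =>
    intro j
    rw [pow_zero, one_mul, pow_zero]
    have hmem : j ∈ Finset.univ.filter (fun j' => blk j' = blk j) := by simp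
    rw [Finset.sum_eq_single_of_mem
      (f := fun j' => ((1 : Matrix (Fin N) (Fin N) ℕ) j j' : ℝ) * w j') j hmem
      (fun b _ hb => by simp [Matrix.one_apply, Ne.symm hb])]
    simp [Matrix.one_apply]
  | succ k ih =>
    intro j
    have key : ∀ j', (((G ^ (k + 1)) j j' : ℕ) : ℝ) = ∑ a, (G j a : ℝ) * ((G ^ k) a j' : ℝ) := by
      intro j'
      rw [pow_succ', Matrix.mul_apply]
      push_cast
      rfl
    calc lam (blk j) ^ (k + 1) * w j
        = lam (blk j) ^ k * (lam (blk j) * w j) := by ring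
      _ = ∑ a ∈ Finset.univ.filter (fun a => blk a = blk j),
            (G j a : ℝ) * (lam (blk j) ^ k * w a) := by
          rw [← heig j, Finset.mul_sum]
          exact Finset.sum_congr rfl fun a _ => by ring
      _ ≤ ∑ a ∈ Finset.univ.filter (fun a => blk a = blk j),
            (G j a : ℝ) * ∑ j' ∈ Finset.univ.filter (fun j' => blk j' = blk j),
              ((G ^ k) a j' : ℝ) * w j' := by
          apply Finset.sum_le_sum
          intro a ha
          have hba : blk a = blk j := (Finset.mem_filter.1 ha).2
          have := ih a
          simp only [hba] at this
          exact mul_le_mul_of_nonneg_left this (Nat.cast_nonneg _)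
      _ ≤ ∑ a, (G j a : ℝ) * ∑ j' ∈ Finset.univ.filter (fun j' => blk j' = blk j),
              ((G ^ k) a j' : ℝ) * w j' := by
          apply Finset.sum_le_sum_of_subset_of_nonneg (Finset.filter_subset _ _)
          intro a _ _
          have : 0 ≤ ∑ j' ∈ Finset.univ.filter (fun j' => blk j' = blk j),
              ((G ^ k) a j' : ℝ) * w j' :=
            Finset.sum_nonneg fun j' _ => mul_nonneg (Nat.cast_nonneg _) (hw j').le
          positivity
      _ = ∑ j' ∈ Finset.univ.filter (fun j' => blk j' = blk j),
            ((G ^ (k + 1)) j j' : ℝ) * w j' := by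
          simp_rw [key, Finset.sum_mul]
          rw [Finset.sum_comm]
          simp_rw [Finset.mul_sum, mul_assoc]

lemma sk_nonneg {N : ℕ} (G : Matrix (Fin N) (Fin N) ℕ) {p : Fin N → ℝ}
    (hp : ∀ i, 0 ≤ p i) (k : ℕ) : 0 ≤ sk G p k :=
  Finset.sum_nonneg fun i _ => Finset.sum_nonneg fun j _ =>
    mul_nonneg (hp i) (Nat.cast_nonneg _)

lemma sk_upper {N m : ℕ} (hN : 1 ≤ N)
    (G : Matrix (Fin N) (Fin N) ℕ) (blk : Fin N → Fin m)
    (hupper : ∀ i j : Fin N, blk j < blk i → G i j = 0)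
    (lam : Fin m → ℝ) (w : Fin N → ℝ) (hw : ∀ i, 0 < w i)
    (heig : ∀ i : Fin N,
      ∑ j ∈ Finset.univ.filter (fun j => blk j = blk i), (G i j : ℝ) * w j
        = lam (blk i) * w i)
    (μ : ℝ) (hμ : 0 ≤ μ)
    (p : Fin N → ℝ) (hp : ∀ i, 0 ≤ p i) (hp1 : ∑ i, p i = 1)
    (hsupp : ∀ i, p i ≠ 0 → ∀ s, CommByIdx G blk s i → lam s ≤ μ)
    (ε : ℝ) (hε : 0 < ε) :
    ∃ C : ℝ, 0 < C ∧ ∀ k, sk G p k ≤ C * (μ + ε) ^ k := by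
  haveI : Nonempty (Fin N) := ⟨⟨0, hN⟩⟩
  set wmin : ℝ := Finset.univ.inf' Finset.univ_nonempty w with hwmin_def
  have hwmin : 0 < wmin := (Finset.lt_inf'_iff _).2 fun i _ => hw i
  have hwmin_le : ∀ i, wmin ≤ w i := fun i => Finset.inf'_le _ (Finset.mem_univ i)
  set K : ℝ := 1 + ∑ i, ∑ j, (G i j : ℝ) * w j with hK_def
  have hrow_nonneg : ∀ i : Fin N, 0 ≤ ∑ j, (G i j : ℝ) * w j :=
    fun i => Finset.sum_nonneg fun j _ => mul_nonneg (Nat.cast_nonneg _) (hw j).le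
  have hK : 0 < K := by
    have : 0 ≤ ∑ i, ∑ j, (G i j : ℝ) * w j :=
      Finset.sum_nonneg fun i _ => hrow_nonneg i
    simp only [hK_def]; linarith
  have hKrow : ∀ i, ∑ j, (G i j : ℝ) * w j ≤ K := by
    intro i
    have h1 : ∑ j, (G i j : ℝ) * w j ≤ ∑ i', ∑ j, (G i' j : ℝ) * w j :=
      Finset.single_le_sum (fun i' _ => hrow_nonneg i') (Finset.mem_univ i)
    simp only [hK_def]; linarith
  set δ : ℝ := min 1 (ε * wmin / K) with hδ_def
  have hδ0 : 0 < δ := lt_min one_pos (div_pos (mul_pos hε hwmin) hK)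
  have hδ1 : δ ≤ 1 := min_le_left _ _
  have hδK : δ * K ≤ ε * wmin := by
    have h1 : δ ≤ ε * wmin / K := min_le_right _ _
    calc δ * K ≤ (ε * wmin / K) * K := by gcongr
      _ = ε * wmin := div_mul_cancel₀ _ hK.ne'
  set v : Fin N → ℝ := fun i => δ ^ ((blk i : ℕ)) * w i with hv_def
  have hv : ∀ i, 0 < v i := fun i => mul_pos (pow_pos hδ0 _) (hw i)
  set Q : Fin N → Prop := fun i => ∀ s, CommByIdx G blk s i → lam s ≤ μ with hQ_def
  have hQc : ∀ i j, Q i → 0 < G i j → Q j := by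
    intro i j hi hij s hs
    obtain ⟨k, j', hb, hpos⟩ := hs
    apply hi s
    refine ⟨k + 1, j', hb, ?_⟩
    rw [pow_succ', Matrix.mul_apply]
    calc 0 < G i j * (G ^ k) j j' := Nat.mul_pos hij hpos
      _ ≤ ∑ a, G i a * (G ^ k) a j' :=
        Finset.single_le_sum (f := fun a => G i a * (G ^ k) a j')
          (fun a _ => Nat.zero_le _) (Finset.mem_univ j)
  have key : ∀ i, Q i → ∑ j, (G i j : ℝ) * v j ≤ (μ + ε) * v i := by
    intro i hi
    have hlami : lam (blk i) ≤ μ := by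
      refine hi (blk i) ⟨0, i, rfl, ?_⟩
      simp [Matrix.one_apply]
    have split := (Finset.sum_filter_add_sum_filter_not Finset.univ
      (fun j => blk j = blk i) (fun j => (G i j : ℝ) * v j)).symm
    have h1 : ∑ j ∈ Finset.univ.filter (fun j => blk j = blk i), (G i j : ℝ) * v j
        = δ ^ ((blk i : ℕ)) * (lam (blk i) * w i) := by
      rw [← heig i, Finset.mul_sum]
      apply Finset.sum_congr rfl
      intro j hj
      have hbj : blk j = blk i := (Finset.mem_filter.1 hj).2
      simp only [hv_def, hbj]
      ring
    have h2 : ∑ j ∈ Finset.univ.filter (fun j => ¬ blk j = blk i), (G i j : ℝ) * v j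
        ≤ δ ^ ((blk i : ℕ) + 1) * K := by
      calc ∑ j ∈ Finset.univ.filter (fun j => ¬ blk j = blk i), (G i j : ℝ) * v j
          ≤ ∑ j ∈ Finset.univ.filter (fun j => ¬ blk j = blk i),
              (G i j : ℝ) * (δ ^ ((blk i : ℕ) + 1) * w j) := by
            apply Finset.sum_le_sum
            intro j hj
            have hne : ¬ blk j = blk i := (Finset.mem_filter.1 hj).2
            rcases lt_or_ge (blk j) (blk i) with hlt | hle
            · simp [hupper i j hlt]
            · have hlt : blk i < blk j := lt_of_le_of_ne hle fun h => hne h.symm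
              have hle' : (blk i : ℕ) + 1 ≤ (blk j : ℕ) := hlt
              have hpow : δ ^ ((blk j : ℕ)) ≤ δ ^ ((blk i : ℕ) + 1) :=
                pow_le_pow_of_le_one hδ0.le hδ1 hle'
              simp only [hv_def]
              exact mul_le_mul_of_nonneg_left
                (mul_le_mul_of_nonneg_right hpow (hw j).le) (Nat.cast_nonneg _)
        _ = δ ^ ((blk i : ℕ) + 1) *
              ∑ j ∈ Finset.univ.filter (fun j => ¬ blk j = blk i), (G i j : ℝ) * w j := by
            rw [Finset.mul_sum]
            exact Finset.sum_congr rfl fun j _ => by ring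
        _ ≤ δ ^ ((blk i : ℕ) + 1) * K := by
            have hsub : ∑ j ∈ Finset.univ.filter (fun j => ¬ blk j = blk i),
                (G i j : ℝ) * w j ≤ ∑ j, (G i j : ℝ) * w j :=
              Finset.sum_le_sum_of_subset_of_nonneg (Finset.filter_subset _ _)
                (fun j _ _ => mul_nonneg (Nat.cast_nonneg _) (hw j).le)
            exact mul_le_mul_of_nonneg_left (le_trans hsub (hKrow i)) (by positivity)
    rw [split]
    have h3 : δ ^ ((blk i : ℕ)) * (lam (blk i) * w i) ≤ δ ^ ((blk i : ℕ)) * (μ * w i) :=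
      mul_le_mul_of_nonneg_left (mul_le_mul_of_nonneg_right hlami (hw i).le)
        (by positivity)
    have h4 : δ ^ ((blk i : ℕ) + 1) * K ≤ δ ^ ((blk i : ℕ)) * (ε * w i) := by
      rw [pow_succ]
      have h5 : δ * K ≤ ε * w i :=
        le_trans hδK (mul_le_mul_of_nonneg_left (hwmin_le i) hε.le)
      calc δ ^ ((blk i : ℕ)) * δ * K = δ ^ ((blk i : ℕ)) * (δ * K) := by ring
        _ ≤ δ ^ ((blk i : ℕ)) * (ε * w i) :=
            mul_le_mul_of_nonneg_left h5 (by positivity)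
    have : (μ + ε) * v i = δ ^ ((blk i : ℕ)) * (μ * w i) + δ ^ ((blk i : ℕ)) * (ε * w i) := by
      simp only [hv_def]; ring
    rw [this]
    linarith [h1, h2, h3, h4]
  have bound := upper_ind G Q hQc v (fun i => (hv i).le) (μ + ε) (by linarith)
    key
  set vmin : ℝ := Finset.univ.inf' Finset.univ_nonempty v with hvmin_def
  set vmax : ℝ := Finset.univ.sup' Finset.univ_nonempty v with hvmax_def
  have hvmin : 0 < vmin := (Finset.lt_inf'_iff _).2 fun i _ => hv i
  have hvmin_le : ∀ i, vmin ≤ v i := fun i => Finset.inf'_le _ (Finset.mem_univ i)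
  have hvmax_le : ∀ i, v i ≤ vmax := fun i => Finset.le_sup' _ (Finset.mem_univ i)
  have hvmax : 0 < vmax := lt_of_lt_of_le (hv ⟨0, hN⟩) (hvmax_le _)
  refine ⟨vmax / vmin, div_pos hvmax hvmin, ?_⟩
  intro k
  have hrow : ∀ i, p i ≠ 0 → ∑ j, ((G ^ k) i j : ℝ) ≤ (μ + ε) ^ k * vmax / vmin := by
    intro i hpi
    have hQi : Q i := hsupp i hpi
    have hb := bound k i hQi
    have h1 : vmin * ∑ j, ((G ^ k) i j : ℝ) ≤ ∑ j, ((G ^ k) i j : ℝ) * v j := by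
      rw [Finset.mul_sum]
      apply Finset.sum_le_sum
      intro j _
      calc vmin * ((G ^ k) i j : ℝ) = ((G ^ k) i j : ℝ) * vmin := by ring
        _ ≤ ((G ^ k) i j : ℝ) * v j :=
            mul_le_mul_of_nonneg_left (hvmin_le j) (Nat.cast_nonneg _)
    have h2 : ∑ j, ((G ^ k) i j : ℝ) * v j ≤ (μ + ε) ^ k * vmax :=
      le_trans hb (mul_le_mul_of_nonneg_left (hvmax_le i) (by positivity))
    calc ∑ j, ((G ^ k) i j : ℝ) ≤ ((μ + ε) ^ k * vmax) / vmin := by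
          rw [le_div_iff₀ hvmin]
          calc (∑ j, ((G ^ k) i j : ℝ)) * vmin = vmin * ∑ j, ((G ^ k) i j : ℝ) := by ring
            _ ≤ ∑ j, ((G ^ k) i j : ℝ) * v j := h1
            _ ≤ (μ + ε) ^ k * vmax := h2
      _ = (μ + ε) ^ k * vmax / vmin := rfl
  have hsk : sk G p k = ∑ i, p i * ∑ j, ((G ^ k) i j : ℝ) := by
    unfold sk
    exact Finset.sum_congr rfl fun i _ => by rw [Finset.mul_sum]
  rw [hsk]
  calc ∑ i, p i * ∑ j, ((G ^ k) i j : ℝ)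
      ≤ ∑ i, p i * ((μ + ε) ^ k * vmax / vmin) := by
        apply Finset.sum_le_sum
        intro i _
        rcases eq_or_ne (p i) 0 with h0 | h0
        · simp [h0]
        · exact mul_le_mul_of_nonneg_left (hrow i h0) (hp i)
    _ = vmax / vmin * (μ + ε) ^ k := by
        rw [← Finset.sum_mul, hp1]; ring

lemma rpow_inv_tendsto {C : ℝ} (hC : 0 < C) :
    Tendsto (fun k : ℕ => C ^ ((k : ℝ)⁻¹)) atTop (nhds 1) := by
  have h0 : Tendsto (fun k : ℕ => ((k : ℝ))⁻¹) atTop (nhds 0) :=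
    tendsto_inv_atTop_nhds_zero_nat
  have := (Real.continuousAt_const_rpow (a := C) (b := 0) hC.ne').tendsto.comp h0
  simpa [Function.comp_def] using this

lemma ev_le {C ρ b : ℝ} (hC : 0 < C) (hρ : 0 ≤ ρ) (hb : ρ < b)
    {u : ℕ → ℝ} (hu : ∀ k, 0 ≤ u k) (h : ∀ k, u k ≤ C * ρ ^ k) :
    ∀ᶠ k in atTop, u k ^ ((k : ℝ)⁻¹) ≤ b := by
  have htend : Tendsto (fun k : ℕ => C ^ ((k : ℝ)⁻¹) * ρ) atTop (nhds ρ) := by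
    simpa using (rpow_inv_tendsto hC).mul_const ρ
  have hev' : ∀ᶠ k : ℕ in atTop, C ^ ((k : ℝ)⁻¹) * ρ < b :=
    htend.eventually_lt_const hb
  filter_upwards [hev', eventually_ge_atTop 1] with k hk hk1
  have hk0 : ((k : ℝ)) ≠ 0 := Nat.cast_ne_zero.2 (by omega)
  calc u k ^ ((k : ℝ)⁻¹) ≤ (C * ρ ^ k) ^ ((k : ℝ)⁻¹) :=
        Real.rpow_le_rpow (hu k) (h k) (by positivity)
    _ = C ^ ((k : ℝ)⁻¹) * ρ := by
        rw [Real.mul_rpow hC.le (pow_nonneg hρ k)]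
        congr 1
        rw [← Real.rpow_natCast ρ k, ← Real.rpow_mul hρ, mul_inv_cancel₀ hk0,
          Real.rpow_one]
    _ ≤ b := hk.le

lemma ev_ge {c ρ b : ℝ} (hc : 0 < c) (hρ : 0 < ρ) (hb : b < ρ)
    {u : ℕ → ℝ} {k0 : ℕ} (h : ∀ k, k0 ≤ k → c * ρ ^ k ≤ u k) :
    ∀ᶠ k in atTop, b ≤ u k ^ ((k : ℝ)⁻¹) := by
  have htend : Tendsto (fun k : ℕ => c ^ ((k : ℝ)⁻¹) * ρ) atTop (nhds ρ) := by
    simpa using (rpow_inv_tendsto hc).mul_const ρ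
  have hev' : ∀ᶠ k : ℕ in atTop, b < c ^ ((k : ℝ)⁻¹) * ρ :=
    htend.eventually_const_lt hb
  filter_upwards [hev', eventually_ge_atTop (max k0 1)] with k hk hk1
  have hk0 : ((k : ℝ)) ≠ 0 := Nat.cast_ne_zero.2 (by omega)
  have huk : 0 ≤ u k := le_trans (by positivity) (h k (le_trans (le_max_left _ _) hk1))
  calc b ≤ c ^ ((k : ℝ)⁻¹) * ρ := hk.le
    _ = (c * ρ ^ k) ^ ((k : ℝ)⁻¹) := by
        rw [Real.mul_rpow hc.le (pow_nonneg hρ.le k)]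
        congr 1
        rw [← Real.rpow_natCast ρ k, ← Real.rpow_mul hρ.le, mul_inv_cancel₀ hk0,
          Real.rpow_one]
    _ ≤ u k ^ ((k : ℝ)⁻¹) :=
        Real.rpow_le_rpow (by positivity) (h k (le_trans (le_max_left _ _) hk1))
          (by positivity)

/-- for `μ ≥ 0` and a probability vector `p`,
`limsup_k s_k(p)^{1/k} ≤ μ` iff `p_i = 0` for every index `i` communicating with some
block `B_s` with `λ_s > μ`. -/
theorem stmt_14
    -- Context: `G` is an `N × N` matrix with nonnegative integer entries, block upper
    -- triangular with respect to the partition of `Fin N` into `m` nonempty consecutive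
    -- blocks given by the fibers of the monotone surjection `blk`; each diagonal block
    -- `G_s` has eigenvalue `λ_s ≥ 0` with strictly positive eigenvector `w|_{B_s}`.
    (N m : ℕ) (hN : 1 ≤ N) (hm : 1 ≤ m)
    (G : Matrix (Fin N) (Fin N) ℕ)
    (blk : Fin N → Fin m) (hmono : Monotone blk) (hsurj : Function.Surjective blk)
    (hupper : ∀ i j : Fin N, blk j < blk i → G i j = 0)
    (lam : Fin m → ℝ) (hlam : ∀ s, 0 ≤ lam s)
    (w : Fin N → ℝ) (hw : ∀ i, 0 < w i)
    (heig : ∀ i : Fin N,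
      ∑ j ∈ Finset.univ.filter (fun j => blk j = blk i), (G i j : ℝ) * w j
        = lam (blk i) * w i)
    :
    ∀ μ : ℝ, 0 ≤ μ →
      ∀ p : Fin N → ℝ, (∀ i, 0 ≤ p i) → (∑ i, p i = 1) →
        (Filter.limsup (fun k : ℕ => sk G p k ^ ((k : ℝ)⁻¹)) Filter.atTop ≤ μ ↔
          ∀ i : Fin N, (∃ s : Fin m, μ < lam s ∧ CommByIdx G blk s i) → p i = 0) := by
  intro μ hμ p hp hp1
  haveI hneN : Nonempty (Fin N) := ⟨⟨0, hN⟩⟩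
  haveI hnem : Nonempty (Fin m) := ⟨⟨0, hm⟩⟩
  set f : ℕ → ℝ := fun k => sk G p k ^ ((k : ℝ)⁻¹) with hf_def
  have hf0 : ∀ k, 0 ≤ f k := fun k => Real.rpow_nonneg (sk_nonneg G hp k) _
  set μmax : ℝ := Finset.univ.sup' Finset.univ_nonempty lam with hμmax_def
  have hμmax_ge : ∀ s, lam s ≤ μmax := fun s => Finset.le_sup' _ (Finset.mem_univ s)
  have hμmax0 : 0 ≤ μmax := le_trans (hlam ⟨0, hm⟩) (hμmax_ge _)
  obtain ⟨C0, hC0, hB0⟩ := sk_upper hN G blk hupper lam w hw heig μmax hμmax0 p hp hp1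
    (fun i _ s _ => hμmax_ge s) 1 one_pos
  have hbdd : Filter.IsBoundedUnder (· ≤ ·) Filter.atTop f := by
    refine ⟨μmax + 2, ?_⟩
    rw [Filter.eventually_map]
    exact ev_le hC0 (by linarith) (by linarith) (sk_nonneg G hp) hB0
  constructor
  · rintro hlim i ⟨s, hμs, k0, j, hbj, hpos⟩
    by_contra hpi
    have hpi' : 0 < p i := lt_of_le_of_ne (hp i) (Ne.symm hpi)
    have hlams : 0 < lam s := lt_of_le_of_lt hμ hμs
    set wmax : ℝ := Finset.univ.sup' Finset.univ_nonempty w with hwmax_def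
    have hwmax_le : ∀ a, w a ≤ wmax := fun a => Finset.le_sup' _ (Finset.mem_univ a)
    have hwmax : 0 < wmax := lt_of_lt_of_le (hw i) (hwmax_le i)
    have hg0 : (0 : ℝ) < ((G ^ k0) i j : ℝ) := by exact_mod_cast hpos
    set c : ℝ := p i * ((G ^ k0) i j : ℝ) * w j / (wmax * lam s ^ k0) with hc_def
    have hc : 0 < c :=
      div_pos (mul_pos (mul_pos hpi' hg0) (hw j)) (mul_pos hwmax (pow_pos hlams k0))
    have hlow : ∀ k, k0 ≤ k → c * lam s ^ k ≤ sk G p k := by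
      intro k hk
      have L1 := lower_ind G blk lam hlam w hw heig (k - k0) j
      simp only [hbj] at L1
      have hdecomp : (G ^ k) = (G ^ k0) * (G ^ (k - k0)) := by
        rw [← pow_add]
        congr 1
        omega
      have L2 : ∀ j', ((G ^ k0) i j : ℝ) * ((G ^ (k - k0)) j j' : ℝ)
          ≤ ((G ^ k) i j' : ℝ) := by
        intro j'
        rw [hdecomp, Matrix.mul_apply]
        push_cast
        exact Finset.single_le_sum
          (f := fun a => ((G ^ k0) i a : ℝ) * ((G ^ (k - k0)) a j' : ℝ))
          (fun a _ => by positivity) (Finset.mem_univ j)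
      have step1 : ((G ^ k0) i j : ℝ) * (lam s ^ (k - k0) * w j)
          ≤ ∑ j' ∈ Finset.univ.filter (fun j' => blk j' = s), ((G ^ k) i j' : ℝ) * w j' := by
        calc ((G ^ k0) i j : ℝ) * (lam s ^ (k - k0) * w j)
            ≤ ((G ^ k0) i j : ℝ) * ∑ j' ∈ Finset.univ.filter (fun j' => blk j' = s),
                ((G ^ (k - k0)) j j' : ℝ) * w j' := mul_le_mul_of_nonneg_left L1 hg0.le
          _ = ∑ j' ∈ Finset.univ.filter (fun j' => blk j' = s),
                (((G ^ k0) i j : ℝ) * ((G ^ (k - k0)) j j' : ℝ)) * w j' := by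
              rw [Finset.mul_sum]
              exact Finset.sum_congr rfl fun j' _ => by ring
          _ ≤ ∑ j' ∈ Finset.univ.filter (fun j' => blk j' = s), ((G ^ k) i j' : ℝ) * w j' :=
              Finset.sum_le_sum fun j' _ =>
                mul_le_mul_of_nonneg_right (L2 j') (hw j').le
      have step2 : ∑ j' ∈ Finset.univ.filter (fun j' => blk j' = s), ((G ^ k) i j' : ℝ) * w j'
          ≤ wmax * ∑ j', ((G ^ k) i j' : ℝ) := by
        calc ∑ j' ∈ Finset.univ.filter (fun j' => blk j' = s), ((G ^ k) i j' : ℝ) * w j'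
            ≤ ∑ j', ((G ^ k) i j' : ℝ) * w j' :=
              Finset.sum_le_sum_of_subset_of_nonneg (Finset.filter_subset _ _)
                (fun j' _ _ => mul_nonneg (Nat.cast_nonneg _) (hw j').le)
          _ ≤ ∑ j', ((G ^ k) i j' : ℝ) * wmax :=
              Finset.sum_le_sum fun j' _ =>
                mul_le_mul_of_nonneg_left (hwmax_le j') (Nat.cast_nonneg _)
          _ = wmax * ∑ j', ((G ^ k) i j' : ℝ) := by
              rw [Finset.mul_sum]
              exact Finset.sum_congr rfl fun j' _ => by ring
      have hskeq : sk G p k = ∑ i', p i' * ∑ j', ((G ^ k) i' j' : ℝ) := by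
        unfold sk
        exact Finset.sum_congr rfl fun i' _ => by rw [Finset.mul_sum]
      have step3 : p i * ∑ j', ((G ^ k) i j' : ℝ) ≤ sk G p k := by
        rw [hskeq]
        exact Finset.single_le_sum
          (f := fun i' => p i' * ∑ j', ((G ^ k) i' j' : ℝ))
          (fun i' _ => mul_nonneg (hp i')
            (Finset.sum_nonneg fun j' _ => Nat.cast_nonneg _))
          (Finset.mem_univ i)
      have h6 : p i * (((G ^ k0) i j : ℝ) * (lam s ^ (k - k0) * w j))
          ≤ p i * (wmax * ∑ j', ((G ^ k) i j' : ℝ)) :=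
        mul_le_mul_of_nonneg_left (le_trans step1 step2) (hp i)
      have h7 : wmax * (p i * ∑ j', ((G ^ k) i j' : ℝ)) ≤ wmax * sk G p k :=
        mul_le_mul_of_nonneg_left step3 hwmax.le
      have h8 : p i * ((G ^ k0) i j : ℝ) * w j * lam s ^ (k - k0) ≤ sk G p k * wmax := by
        nlinarith [h6, h7]
      have hlamk : lam s ^ k = lam s ^ k0 * lam s ^ (k - k0) := by
        rw [← pow_add]
        congr 1
        omega
      have hcalc : c * lam s ^ k
          = (p i * ((G ^ k0) i j : ℝ) * w j * lam s ^ (k - k0)) / wmax := by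
        rw [hc_def, hlamk]
        field_simp
      rw [hcalc, div_le_iff₀ hwmax]
      linarith [h8]
    set μ' : ℝ := (μ + lam s) / 2 with hμ'_def
    have hμ'1 : μ < μ' := by rw [hμ'_def]; linarith
    have hμ'2 : μ' < lam s := by rw [hμ'_def]; linarith
    have hev := ev_ge hc hlams hμ'2 hlow
    have hle : μ' ≤ Filter.limsup f Filter.atTop :=
      Filter.le_limsup_of_frequently_le hev.frequently hbdd
    linarith
  · intro hvan
    have key : ∀ ε : ℝ, 0 < ε → Filter.limsup f Filter.atTop ≤ μ + ε := by
      intro ε hε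
      have hsupp : ∀ i, p i ≠ 0 → ∀ s, CommByIdx G blk s i → lam s ≤ μ := by
        intro i hpi s hcomm
        by_contra hgt
        push_neg at hgt
        exact hpi (hvan i ⟨s, hgt, hcomm⟩)
      obtain ⟨C, hC, hB⟩ := sk_upper hN G blk hupper lam w hw heig μ hμ p hp hp1 hsupp
        (ε / 2) (by linarith)
      have hev := ev_le hC (by linarith) (show μ + ε / 2 < μ + ε by linarith)
        (sk_nonneg G hp) hB
      exact Filter.limsup_le_of_le
        (Filter.isCoboundedUnder_le_of_le Filter.atTop hf0) hev
    by_contra hgt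
    push_neg at hgt
    have := key ((Filter.limsup f Filter.atTop - μ) / 2) (by linarith)
    linarith
end
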